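/- arXiv:2010.10994 — 3 statements merged into one kernel-verified Lean document; each statement's English description precedes it below -/
import Mathlib

section
/- Define the empirical generalization error ĝen(w, s̃, u) = (1/N) Σ_{i=1}^N ( ℓ(w, z̃_{i+(1−u_i)N}) − ℓ(w, z̃_{i+u_i N}) ). Assume that E_{P_W × P_Z}[|ℓ(W, Z)|] < ∞ and that E[|ℓ(W, Z̃_k)|] < ∞ for every k ∈ {1,…,2N}, where P_W is the marginal law of W. Then E_{P_{W,S̃,U}}[ ĝen(W, S̃, U) ] = E_{P_{W,S}}[ gen(W, S) ]. -/
open MeasureTheory ProbabilityTheory ENNReal Classical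

/-- The index `i + u·N` in the super-sample: `Z_i = Z̃_{i + U_i N}`. -/
def subIdx (N : ℕ) (i : Fin N) (u : Bool) : Fin (2 * N) :=
  ⟨i.val + if u then N else 0, by have := i.isLt; cases u <;> simp <;> omega⟩

/-- The dataset `S` selected from the super-sample `S̃` by the Bernoulli variables `U`. -/
def dataset {𝒵 : Type*} (N : ℕ) (p : (Fin (2 * N) → 𝒵) × (Fin N → Bool)) : Fin N → 𝒵 :=
  fun i => p.1 (subIdx N i (p.2 i))

lemma measurable_dataset {𝒵 : Type*} [MeasurableSpace 𝒵] {N : ℕ} :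
    Measurable (dataset (𝒵 := 𝒵) N) := by
  refine measurable_pi_lambda _ fun i => ?_
  have h1 : Measurable fun q : (Fin (2 * N) → 𝒵) × Bool => q.1 (subIdx N i q.2) :=
    measurable_from_prod_countable_left fun b => measurable_pi_apply (subIdx N i b)
  have h2 : Measurable fun p : (Fin (2 * N) → 𝒵) × (Fin N → Bool) => (p.1, p.2 i) :=
    measurable_fst.prodMk ((measurable_pi_apply i).comp measurable_snd)
  exact h1.comp h2

/-- The Bernoulli(1/2) distribution on `Bool`. -/
noncomputable def bern : Measure Bool := (PMF.bernoulli (1 / 2) (by norm_num)).toMeasure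

instance : IsProbabilityMeasure bern := PMF.toMeasure.isProbabilityMeasure _

lemma subIdx_inj {N : ℕ} {a c : Fin N} {b d : Bool} (h : subIdx N a b = subIdx N c d) :
    a = c ∧ b = d := by
  have h' : a.val + (if b then N else 0) = c.val + (if d then N else 0) := congrArg Fin.val h
  have ha := a.isLt; have hc := c.isLt
  cases b <;> cases d <;> simp at h' <;>
    first
    | exact ⟨Fin.ext (by omega), rfl⟩
    | omega

lemma map_pi_eval {𝒵 : Type*} [MeasurableSpace 𝒵] (PZ : Measure 𝒵) [IsProbabilityMeasure PZ]
    {m n : ℕ} (e : Fin m → Fin n) (he : Function.Injective e) :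
    (Measure.pi fun _ : Fin n => PZ).map (fun s (j : Fin m) => s (e j)) =
      Measure.pi fun _ : Fin m => PZ := by
  have hmeas : Measurable fun (s : Fin n → 𝒵) (j : Fin m) => s (e j) :=
    measurable_pi_lambda _ fun j => measurable_pi_apply (e j)
  refine (Measure.pi_eq (μ := fun _ : Fin m => PZ) fun B hB => ?_).symm
  rw [Measure.map_apply hmeas (MeasurableSet.univ_pi hB)]
  classical
  set C : Fin n → Set 𝒵 := fun k => if h : ∃ j, e j = k then B h.choose else Set.univ with hC
  have hCe : ∀ j, C (e j) = B j := by
    intro j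
    have h : ∃ j', e j' = e j := ⟨j, rfl⟩
    rw [hC]; simp only; rw [dif_pos h]; exact congrArg B (he h.choose_spec)
  have hpre : (fun s (j : Fin m) => s (e j)) ⁻¹' Set.pi Set.univ B = Set.pi Set.univ C := by
    ext s
    simp only [Set.mem_preimage, Set.mem_pi, Set.mem_univ, true_implies]
    constructor
    · intro h k
      by_cases hk : ∃ j, e j = k
      · obtain ⟨j, rfl⟩ := hk; rw [hCe]; exact h j
      · simp [hC, dif_neg hk]
    · intro h j
      have := h (e j); rwa [hCe] at this
  rw [hpre, Measure.pi_pi]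
  have h1 : ∏ k, PZ (C k) = ∏ k ∈ Finset.univ.image e, PZ (C k) := by
    refine (Finset.prod_subset (Finset.subset_univ _) ?_).symm
    intro k _ hk
    have hk' : ¬ ∃ j, e j = k := by simpa [Finset.mem_image] using hk
    simp [hC, dif_neg hk']
  rw [h1, Finset.prod_image (fun a _ b _ h => he h)]
  exact Finset.prod_congr rfl fun j _ => by rw [hCe j]

lemma map_pi_pair {𝒵 : Type*} [MeasurableSpace 𝒵] (PZ : Measure 𝒵) [IsProbabilityMeasure PZ]
    {N n : ℕ} (e : Fin (N + 1) → Fin n) (he : Function.Injective e) :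
    (Measure.pi fun _ : Fin n => PZ).map
        (fun s => (s (e 0), fun j : Fin N => s (e j.succ))) =
      PZ.prod (Measure.pi fun _ : Fin N => PZ) := by
  have hmeas : Measurable fun (s : Fin n → 𝒵) (j : Fin (N + 1)) => s (e j) :=
    measurable_pi_lambda _ fun j => measurable_pi_apply (e j)
  have hco : (fun s : Fin n → 𝒵 => (s (e 0), fun j : Fin N => s (e j.succ))) =
      (MeasurableEquiv.piFinSuccAbove (fun _ : Fin (N + 1) => 𝒵) 0) ∘
        (fun s (j : Fin (N + 1)) => s (e j)) := by
    funext s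
    simp only [Function.comp_apply, MeasurableEquiv.piFinSuccAbove, MeasurableEquiv.coe_mk,
      Fin.insertNthEquiv, Equiv.coe_fn_symm_mk, Fin.removeNth, Fin.succAbove_zero]
    rfl
  rw [hco, ← Measure.map_map (MeasurableEquiv.measurable _) hmeas, map_pi_eval PZ e he,
    (measurePreserving_piFinSuccAbove (fun _ : Fin (N + 1) => PZ) 0).map_eq]

/-- in the randomized subsample setting, the expected empirical generalization
error equals the expected generalization error:
`E_{P_{W,S̃,U}}[ĝen(W, S̃, U)] = E_{P_{W,S}}[gen(W, S)]`. -/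
theorem stmt9
    {𝒵 𝒲 : Type*}
    [MeasurableSpace 𝒵] [StandardBorelSpace 𝒵] [Nonempty 𝒵]
    [MeasurableSpace 𝒲] [StandardBorelSpace 𝒲] [Nonempty 𝒲]
    {Ω : Type*} [MeasurableSpace Ω] (μ : Measure Ω) [IsProbabilityMeasure μ]
    (N : ℕ) (hN : 0 < N)
    (PZ : Measure 𝒵) [IsProbabilityMeasure PZ]
    (St : Ω → Fin (2 * N) → 𝒵) (U : Ω → Fin N → Bool) (W : Ω → 𝒲)
    (hSt : Measurable St) (hU : Measurable U) (hW : Measurable W)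
    -- `S̃` is i.i.d. `P_Z`, `U` is i.i.d. Bernoulli(1/2), and they are independent
    (hlaw : μ.map (fun ω => (St ω, U ω)) =
      (Measure.pi fun _ : Fin (2 * N) => PZ).prod (Measure.pi fun _ : Fin N => bern))
    -- the hypothesis `W` is produced by a Markov kernel applied to the dataset `S`
    (hkernel : ∃ κ : Kernel (Fin N → 𝒵) 𝒲, IsMarkovKernel κ ∧
      μ.map (fun ω => ((St ω, U ω), W ω)) =
        (μ.map fun ω => (St ω, U ω)) ⊗ₘ κ.comap (dataset N) measurable_dataset)
    (ℓ : 𝒲 → 𝒵 → ℝ) (hℓ : Measurable fun p : 𝒲 × 𝒵 => ℓ p.1 p.2)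
    -- integrability: `E_{P_W × P_Z}[|ℓ|] < ∞` and `E[|ℓ(W, Z̃_k)|] < ∞` for every `k`
    (hint : Integrable (fun p : 𝒲 × 𝒵 => ℓ p.1 p.2) ((μ.map W).prod PZ))
    (hint' : ∀ k : Fin (2 * N), Integrable (fun ω => ℓ (W ω) (St ω k)) μ) :
    ∫ ω, ((1 / N : ℝ) * ∑ i,
        (ℓ (W ω) (St ω (subIdx N i (!U ω i))) - ℓ (W ω) (St ω (subIdx N i (U ω i))))) ∂μ =
      ∫ ω, ((∫ z, ℓ (W ω) z ∂PZ) -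
        (1 / N : ℝ) * ∑ i, ℓ (W ω) (St ω (subIdx N i (U ω i)))) ∂μ := by
  classical
  obtain ⟨κ, hκ, hρ⟩ := hkernel
  haveI := hκ
  -- measurability of coordinate-selection maps
  have hmeas_sel : ∀ (v : Bool → Bool) (i : Fin N),
      Measurable fun x : (Fin (2 * N) → 𝒵) × (Fin N → Bool) =>
        x.1 (subIdx N i (v (x.2 i))) := by
    intro v i
    have h1 : Measurable fun q : (Fin (2 * N) → 𝒵) × Bool => q.1 (subIdx N i (v q.2)) :=
      measurable_from_prod_countable_left fun b => measurable_pi_apply (subIdx N i (v b))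
    exact h1.comp (measurable_fst.prodMk ((measurable_pi_apply i).comp measurable_snd))
  have hghost : ∀ i : Fin N, Measurable fun ω => St ω (subIdx N i (!U ω i)) := fun i =>
    (hmeas_sel (fun b => !b) i).comp (hSt.prodMk hU)
  -- the key distributional identity: (W, ghost_i) ~ P_W × P_Z
  have hmap : ∀ i : Fin N,
      μ.map (fun ω => (W ω, St ω (subIdx N i (!U ω i)))) = (μ.map W).prod PZ := by
    intro i
    set ν : Measure ((Fin (2 * N) → 𝒵) × (Fin N → Bool)) :=
      (Measure.pi fun _ : Fin (2 * N) => PZ).prod (Measure.pi fun _ : Fin N => bern) with hν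
    set κ' := κ.comap (dataset N) measurable_dataset with hκ'
    set T : ((Fin (2 * N) → 𝒵) × (Fin N → Bool)) × 𝒲 → 𝒲 × 𝒵 :=
      fun p => (p.2, p.1.1 (subIdx N i (!p.1.2 i))) with hT
    have hTm : Measurable T :=
      measurable_snd.prodMk ((hmeas_sel (fun b => !b) i).comp measurable_fst)
    have hpairm : Measurable fun ω => ((St ω, U ω), W ω) := (hSt.prodMk hU).prodMk hW
    have hmm : μ.map (fun ω => (W ω, St ω (subIdx N i (!U ω i)))) = (ν ⊗ₘ κ').map T := by
      have h0 : μ.map (fun ω => (W ω, St ω (subIdx N i (!U ω i)))) =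
          (μ.map fun ω => ((St ω, U ω), W ω)).map T := by
        rw [Measure.map_map hTm hpairm]; rfl
      rw [h0, hρ, hlaw]
    have hrect : ∀ A B, MeasurableSet A → MeasurableSet B →
        ((ν ⊗ₘ κ').map T) (A ×ˢ B) =
          (∫⁻ d, κ d A ∂(Measure.pi fun _ : Fin N => PZ)) * PZ B := by
      intro A B hA hB
      rw [Measure.map_apply hTm (hA.prod hB), Measure.compProd_apply (hTm (hA.prod hB))]
      have hpt : ∀ x : (Fin (2 * N) → 𝒵) × (Fin N → Bool),
          κ' x (Prod.mk x ⁻¹' (T ⁻¹' (A ×ˢ B))) =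
            if x.1 (subIdx N i (!x.2 i)) ∈ B then κ (dataset N x) A else 0 := by
        intro x
        by_cases hx : x.1 (subIdx N i (!x.2 i)) ∈ B
        · have hxA : Prod.mk x ⁻¹' (T ⁻¹' (A ×ˢ B)) = A := by
            ext w; simp [hT, hx]
          rw [hxA, if_pos hx, hκ', Kernel.comap_apply]
        · have hxA : Prod.mk x ⁻¹' (T ⁻¹' (A ×ˢ B)) = ∅ := by
            ext w; simp [hT, hx]
          rw [hxA, if_neg hx]; simp
      rw [lintegral_congr hpt]
      have hfm : Measurable fun x : (Fin (2 * N) → 𝒵) × (Fin N → Bool) =>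
          (if x.1 (subIdx N i (!x.2 i)) ∈ B then κ (dataset N x) A else 0 : ℝ≥0∞) := by
        refine Measurable.ite ?_ ((κ.measurable_coe hA).comp measurable_dataset)
          measurable_const
        exact (hmeas_sel (fun b => !b) i) hB
      rw [hν, lintegral_prod_symm _ hfm.aemeasurable]
      have hinner : ∀ u : Fin N → Bool,
          (∫⁻ s, (if s (subIdx N i (!u i)) ∈ B then κ (dataset N (s, u)) A else 0)
              ∂(Measure.pi fun _ : Fin (2 * N) => PZ)) =
            (∫⁻ d, κ d A ∂(Measure.pi fun _ : Fin N => PZ)) * PZ B := by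
        intro u
        set e : Fin (N + 1) → Fin (2 * N) :=
          Fin.cases (subIdx N i (!u i)) (fun j => subIdx N j (u j)) with he
        have hei : Function.Injective e := by
          intro x y hxy
          induction x using Fin.cases with
          | zero =>
            induction y using Fin.cases with
            | zero => rfl
            | succ y =>
              rw [he] at hxy; simp only [Fin.cases_zero, Fin.cases_succ] at hxy
              obtain ⟨h1, h2⟩ := subIdx_inj hxy
              subst h1; simp at h2
          | succ x =>
            induction y using Fin.cases with
            | zero =>
              rw [he] at hxy; simp only [Fin.cases_zero, Fin.cases_succ] at hxy
              obtain ⟨h1, h2⟩ := subIdx_inj hxy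
              subst h1; simp at h2
            | succ y =>
              rw [he] at hxy; simp only [Fin.cases_succ] at hxy
              obtain ⟨h1, _⟩ := subIdx_inj hxy
              rw [h1]
        set G : 𝒵 × (Fin N → 𝒵) → ℝ≥0∞ := fun q => if q.1 ∈ B then κ q.2 A else 0 with hG
        have hGm : Measurable G :=
          Measurable.ite (measurable_fst hB) ((κ.measurable_coe hA).comp measurable_snd)
            measurable_const
        have hΦ : Measurable fun s : Fin (2 * N) → 𝒵 =>
            (s (e 0), fun j : Fin N => s (e j.succ)) :=
          (measurable_pi_apply _).prodMk (measurable_pi_lambda _ fun j => measurable_pi_apply _)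
        have step : (∫⁻ s, (if s (subIdx N i (!u i)) ∈ B then κ (dataset N (s, u)) A else 0)
              ∂(Measure.pi fun _ : Fin (2 * N) => PZ)) =
            ∫⁻ s, G (s (e 0), fun j => s (e j.succ))
              ∂(Measure.pi fun _ : Fin (2 * N) => PZ) := by
          refine lintegral_congr fun s => ?_
          have h0 : e 0 = subIdx N i (!u i) := by simp [he]
          have hsucc : (fun j : Fin N => s (e j.succ)) = dataset N (s, u) := by
            funext j; rw [he]; simp [dataset]
          rw [hG]; simp only [h0, hsucc]
        rw [step, ← lintegral_map hGm hΦ, map_pi_pair PZ e hei,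
          lintegral_prod _ hGm.aemeasurable]
        have hz : ∀ z, (∫⁻ d, G (z, d) ∂(Measure.pi fun _ : Fin N => PZ)) =
            Set.indicator B
              (fun _ => ∫⁻ d, κ d A ∂(Measure.pi fun _ : Fin N => PZ)) z := by
          intro z; rw [hG]; by_cases hzB : z ∈ B <;> simp [hzB]
        rw [lintegral_congr hz, lintegral_indicator_const hB, mul_comm]
      rw [lintegral_congr hinner, lintegral_const, measure_univ, mul_one]
    have hWA : ∀ A, MeasurableSet A →
        μ.map W A = ∫⁻ d, κ d A ∂(Measure.pi fun _ : Fin N => PZ) := by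
      intro A hA
      have h1 : μ.map W A = ((ν ⊗ₘ κ').map T) (A ×ˢ Set.univ) := by
        rw [← hmm, Measure.map_apply (hW.prodMk (hghost i)) (hA.prod MeasurableSet.univ),
          Measure.map_apply hW hA]
        congr 1; ext ω; simp
      rw [h1, hrect A Set.univ hA MeasurableSet.univ, measure_univ, mul_one]
    haveI : IsProbabilityMeasure (μ.map W) := Measure.isProbabilityMeasure_map hW.aemeasurable
    rw [hmm]
    refine (Measure.prod_eq fun A B hA hB => ?_).symm
    rw [hrect A B hA hB, hWA A hA]
  -- scalar computations
  set I : ℝ := ∫ p : 𝒲 × 𝒵, ℓ p.1 p.2 ∂((μ.map W).prod PZ) with hIdef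
  have hgint : ∀ i : Fin N, ∫ ω, ℓ (W ω) (St ω (subIdx N i (!U ω i))) ∂μ = I := by
    intro i
    have h1 : (∫ p : 𝒲 × 𝒵, ℓ p.1 p.2 ∂(μ.map fun ω => (W ω, St ω (subIdx N i (!U ω i)))))
        = ∫ ω, ℓ (W ω) (St ω (subIdx N i (!U ω i))) ∂μ :=
      integral_map (hW.prodMk (hghost i)).aemeasurable hℓ.aestronglyMeasurable
    rw [← h1, hmap i]
  have hCsm : StronglyMeasurable fun w : 𝒲 => ∫ z, ℓ w z ∂PZ :=
    hℓ.stronglyMeasurable.integral_prod_right'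
  have hCint : (∫ ω, (∫ z, ℓ (W ω) z ∂PZ) ∂μ) = I := by
    have h1 : (∫ w, (∫ z, ℓ w z ∂PZ) ∂(μ.map W)) = ∫ ω, (∫ z, ℓ (W ω) z ∂PZ) ∂μ :=
      integral_map hW.aemeasurable hCsm.aestronglyMeasurable
    rw [← h1, hIdef, integral_prod _ hint]
  have hintg : ∀ i : Fin N,
      Integrable (fun ω => ℓ (W ω) (St ω (subIdx N i (!U ω i)))) μ := by
    intro i
    have hsU : MeasurableSet {ω | U ω i = true} :=
      ((measurable_pi_apply i).comp hU) (measurableSet_singleton true)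
    have heq : (fun ω => ℓ (W ω) (St ω (subIdx N i (!U ω i)))) =
        ({ω | U ω i = true}.indicator fun ω => ℓ (W ω) (St ω (subIdx N i false))) +
          ({ω | U ω i = true}ᶜ.indicator fun ω => ℓ (W ω) (St ω (subIdx N i true))) := by
      funext ω
      by_cases h : U ω i = true
      · simp [Set.indicator_apply, h]
      · have h' : U ω i = false := by simpa using h
        simp [Set.indicator_apply, h, h']
    rw [heq]
    exact ((hint' _).indicator hsU).add ((hint' _).indicator hsU.compl)
  have hintt : ∀ i : Fin N,
      Integrable (fun ω => ℓ (W ω) (St ω (subIdx N i (U ω i)))) μ := by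
    intro i
    have hsU : MeasurableSet {ω | U ω i = true} :=
      ((measurable_pi_apply i).comp hU) (measurableSet_singleton true)
    have heq : (fun ω => ℓ (W ω) (St ω (subIdx N i (U ω i)))) =
        ({ω | U ω i = true}.indicator fun ω => ℓ (W ω) (St ω (subIdx N i true))) +
          ({ω | U ω i = true}ᶜ.indicator fun ω => ℓ (W ω) (St ω (subIdx N i false))) := by
      funext ω
      by_cases h : U ω i = true
      · simp [Set.indicator_apply, h]
      · have h' : U ω i = false := by simpa using h
        simp [Set.indicator_apply, h, h']
    rw [heq]
    exact ((hint' _).indicator hsU).add ((hint' _).indicator hsU.compl)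
  have hintC : Integrable (fun ω => ∫ z, ℓ (W ω) z ∂PZ) μ := by
    have h1 : Integrable (fun w => ∫ z, ℓ w z ∂PZ) (μ.map W) := hint.integral_prod_left
    exact (integrable_map_measure hCsm.aestronglyMeasurable hW.aemeasurable).mp h1
  set Tr : Fin N → ℝ := fun i => ∫ ω, ℓ (W ω) (St ω (subIdx N i (U ω i))) ∂μ with hTr
  have hL : (∫ ω, ((1 / N : ℝ) * ∑ i,
        (ℓ (W ω) (St ω (subIdx N i (!U ω i))) - ℓ (W ω) (St ω (subIdx N i (U ω i))))) ∂μ)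
      = (1 / N : ℝ) * ∑ i, (I - Tr i) := by
    rw [integral_const_mul _, integral_finset_sum (μ := μ)
      (f := fun (i : Fin N) ω =>
        ℓ (W ω) (St ω (subIdx N i (!U ω i))) - ℓ (W ω) (St ω (subIdx N i (U ω i))))
      _ fun i _ => (hintg i).sub (hintt i)]
    congr 1
    refine Finset.sum_congr rfl fun i _ => ?_
    rw [integral_sub (hintg i) (hintt i), hgint i]
  have hR : (∫ ω, ((∫ z, ℓ (W ω) z ∂PZ) -
        (1 / N : ℝ) * ∑ i, ℓ (W ω) (St ω (subIdx N i (U ω i)))) ∂μ)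
      = I - (1 / N : ℝ) * ∑ i, Tr i := by
    rw [integral_sub hintC
        (Integrable.const_mul (integrable_finset_sum _ fun i _ => hintt i) _),
      hCint, integral_const_mul _, integral_finset_sum (μ := μ)
      (f := fun (i : Fin N) ω => ℓ (W ω) (St ω (subIdx N i (U ω i))))
      _ fun i _ => hintt i]
  rw [hL, hR]
  have hN' : (N : ℝ) ≠ 0 := Nat.cast_ne_zero.mpr hN.ne'
  rw [Finset.sum_sub_distrib, Finset.sum_const, Finset.card_univ, Fintype.card_fin,
    nsmul_eq_mul]
  field_simp
end

section
/- Let W, Z_1, …, Z_N be jointly distributed random elements of standard Borel spaces such that Z_1, …, Z_N are mutually independent. For each i ∈ {1,…,N}, writing S^{i−1} = (Z_1, …, Z_{i−1}) and S^{−i} = (Z_1, …, Z_{i−1}, Z_{i+1}, …, Z_N), it holds that I(W; Z_i | S^{i−1}) ≤ I(W; Z_i | S^{−i}). -/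
open MeasureTheory ProbabilityTheory ENNReal Classical

/-- Kullback--Leibler divergence: `∫ log (dP/dQ) dP` if `P ≪ Q` (and the log-likelihood ratio
is integrable), and `+∞` otherwise. -/
noncomputable def KLdiv {Ω : Type*} [MeasurableSpace Ω] (P Q : Measure Ω) : ℝ≥0∞ :=
  if P ≪ Q ∧ Integrable (llr P Q) P then ENNReal.ofReal (∫ x, llr P Q x ∂P) else ⊤


section Basic

variable {Ω : Type*} [MeasurableSpace Ω] {P Q : Measure Ω}

lemma KLdiv_of_ac_int (h1 : P ≪ Q) (h2 : Integrable (llr P Q) P) :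
    KLdiv P Q = ENNReal.ofReal (∫ x, llr P Q x ∂P) := if_pos ⟨h1, h2⟩

lemma KLdiv_of_not (h : ¬ (P ≪ Q ∧ Integrable (llr P Q) P)) : KLdiv P Q = ⊤ := if_neg h

lemma KLdiv_of_not_ac (h : ¬ P ≪ Q) : KLdiv P Q = ⊤ := KLdiv_of_not (fun hc => h hc.1)

lemma KLdiv_of_not_int (h : ¬ Integrable (llr P Q) P) : KLdiv P Q = ⊤ :=
  KLdiv_of_not (fun hc => h hc.2)

/-- a.e. positivity and finiteness of the RN derivative. -/
lemma rnDeriv_pos_fin [SigmaFinite P] [SigmaFinite Q] (h : P ≪ Q) :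
    ∀ᵐ x ∂P, 0 < P.rnDeriv Q x ∧ P.rnDeriv Q x < ⊤ := by
  filter_upwards [Measure.rnDeriv_pos h, h.ae_le (Measure.rnDeriv_lt_top P Q)] with x h1 h2
  exact ⟨h1, h2⟩

lemma lintegral_rnDeriv_inv_le [SigmaFinite P] [IsProbabilityMeasure Q] (h : P ≪ Q) :
    ∫⁻ x, (P.rnDeriv Q x)⁻¹ ∂P ≤ 1 := by
  have : ∫⁻ x, (P.rnDeriv Q x)⁻¹ ∂P
      = ∫⁻ x, P.rnDeriv Q x * (P.rnDeriv Q x)⁻¹ ∂Q :=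
    (MeasureTheory.lintegral_rnDeriv_mul h (Measure.measurable_rnDeriv P Q).inv.aemeasurable).symm
  rw [this]
  calc ∫⁻ x, P.rnDeriv Q x * (P.rnDeriv Q x)⁻¹ ∂Q ≤ ∫⁻ _, 1 ∂Q := by
        refine lintegral_mono fun x => ?_
        rcases eq_or_ne (P.rnDeriv Q x) 0 with h0 | h0
        · simp [h0]
        rcases eq_or_ne (P.rnDeriv Q x) ⊤ with ht | ht
        · simp [ht]
        · rw [ENNReal.mul_inv_cancel h0 ht]
    _ = 1 := by simp

/-- B1: the negative part of the log-likelihood ratio has `∫⁻ ofReal` at most 1. -/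
lemma lintegral_ofReal_neg_llr_le [SigmaFinite P] [IsProbabilityMeasure Q] (h : P ≪ Q) :
    ∫⁻ x, ENNReal.ofReal (-(llr P Q x)) ∂P ≤ 1 := by
  refine le_trans (le_trans (lintegral_mono_ae ?_) le_rfl) (lintegral_rnDeriv_inv_le h)
  filter_upwards [rnDeriv_pos_fin h] with x hx
  have hpos : 0 < (P.rnDeriv Q x).toReal := ENNReal.toReal_pos hx.1.ne' hx.2.ne
  have : -(llr P Q x) = Real.log (P.rnDeriv Q x).toReal⁻¹ := by
    rw [llr_def, Real.log_inv]
  rw [this]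
  calc ENNReal.ofReal (Real.log (P.rnDeriv Q x).toReal⁻¹)
      ≤ ENNReal.ofReal ((P.rnDeriv Q x).toReal⁻¹) := by
        apply ENNReal.ofReal_le_ofReal
        have := Real.log_le_sub_one_of_pos (inv_pos.mpr hpos)
        linarith
    _ = (P.rnDeriv Q x)⁻¹ := by
        rw [← ENNReal.toReal_inv, ENNReal.ofReal_toReal]
        simp [hx.1.ne']

/-- B2: nonnegativity of KL integral for probability measures. -/
lemma integral_llr_nonneg' [IsProbabilityMeasure P] [IsProbabilityMeasure Q] (h : P ≪ Q)
    (hint : Integrable (llr P Q) P) : 0 ≤ ∫ x, llr P Q x ∂P := by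
  have hmeas : Measurable fun x => ((P.rnDeriv Q x)⁻¹).toReal :=
    (Measure.measurable_rnDeriv P Q).inv.ennreal_toReal
  have hfin : ∫⁻ x, (P.rnDeriv Q x)⁻¹ ∂P ≤ 1 := lintegral_rnDeriv_inv_le h
  have hlt : ∀ᵐ x ∂P, (P.rnDeriv Q x)⁻¹ < ⊤ := by
    filter_upwards [rnDeriv_pos_fin h] with x hx
    simp [ENNReal.inv_lt_top, hx.1]
  have hint_inv : Integrable (fun x => ((P.rnDeriv Q x)⁻¹).toReal) P := by
    refine integrable_toReal_of_lintegral_ne_top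
      (Measure.measurable_rnDeriv P Q).inv.aemeasurable ?_
    exact (lt_of_le_of_lt hfin one_lt_top).ne
  have hle : ∀ᵐ x ∂P, -(llr P Q x) ≤ ((P.rnDeriv Q x)⁻¹).toReal - 1 := by
    filter_upwards [rnDeriv_pos_fin h] with x hx
    have hpos : 0 < (P.rnDeriv Q x).toReal := ENNReal.toReal_pos hx.1.ne' hx.2.ne
    have h1 : -(llr P Q x) = Real.log (P.rnDeriv Q x).toReal⁻¹ := by
      rw [llr_def, Real.log_inv]
    rw [h1, ENNReal.toReal_inv]
    exact Real.log_le_sub_one_of_pos (inv_pos.mpr hpos)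
  have h2 : ∫ x, -(llr P Q x) ∂P ≤ ∫ x, (((P.rnDeriv Q x)⁻¹).toReal - 1) ∂P :=
    integral_mono_ae hint.neg (hint_inv.sub (integrable_const 1)) hle
  have h3 : ∫ x, (((P.rnDeriv Q x)⁻¹).toReal - 1) ∂P
      = (∫⁻ x, (P.rnDeriv Q x)⁻¹ ∂P).toReal - 1 := by
    rw [integral_sub hint_inv (integrable_const 1), integral_const,
      integral_toReal (f := fun x => (P.rnDeriv Q x)⁻¹) (Measure.measurable_rnDeriv P Q).inv.aemeasurable hlt]
    simp
  have h4 : (∫⁻ x, (P.rnDeriv Q x)⁻¹ ∂P).toReal ≤ 1 := by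
    calc (∫⁻ x, (P.rnDeriv Q x)⁻¹ ∂P).toReal ≤ (1 : ℝ≥0∞).toReal :=
      ENNReal.toReal_mono one_ne_top hfin
    _ = 1 := by simp
  rw [integral_neg] at h2
  linarith

end Basic

section Aux

variable {α : Type*} [MeasurableSpace α] {μ : Measure α}

lemma ennnorm_eq_ofReal_add_ofReal_neg (a : ℝ) :
    (‖a‖₊ : ℝ≥0∞) = ENNReal.ofReal a + ENNReal.ofReal (-a) := by
  rcases le_total 0 a with h | h
  · rw [ENNReal.ofReal_of_nonpos (neg_nonpos.mpr h), add_zero, ← enorm_eq_nnnorm, Real.enorm_eq_ofReal h]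
  · rw [ENNReal.ofReal_of_nonpos h, zero_add, ← nnnorm_neg, ← enorm_eq_nnnorm, Real.enorm_eq_ofReal (by linarith)]

lemma integrable_iff_lintegral_nnorm {f : α → ℝ} (hf : AEStronglyMeasurable f μ) :
    Integrable f μ ↔ ∫⁻ a, (‖f a‖₊ : ℝ≥0∞) ∂μ < ⊤ :=
  ⟨fun h => h.2, fun h => ⟨hf, h⟩⟩

lemma ofReal_eq_ofReal_max (a : ℝ) : ENNReal.ofReal a = ENNReal.ofReal (a ⊔ 0) := by
  rcases le_total 0 a with h | h
  · rw [sup_eq_left.mpr h]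
  · rw [sup_eq_right.mpr h, ENNReal.ofReal_of_nonpos h, ENNReal.ofReal_zero]

/-- If `g` is integrable and the negative part has `∫⁻ ofReal ≤ 1`, then
`∫⁻ ofReal g ≤ ofReal (∫ g) + 1`. -/
lemma lintegral_ofReal_le_ofReal_integral_add_one {g : α → ℝ} (hint : Integrable g μ)
    (hneg : ∫⁻ x, ENNReal.ofReal (-(g x)) ∂μ ≤ 1) :
    ∫⁻ x, ENNReal.ofReal (g x) ∂μ ≤ ENNReal.ofReal (∫ x, g x ∂μ) + 1 := by
  have hpos_int : Integrable (fun x => g x ⊔ 0) μ := hint.pos_part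
  have hneg_int : Integrable (fun x => (-g x) ⊔ 0) μ := hint.neg.pos_part
  have h1 : ∫⁻ x, ENNReal.ofReal (g x) ∂μ = ENNReal.ofReal (∫ x, g x ⊔ 0 ∂μ) := by
    rw [ofReal_integral_eq_lintegral_ofReal hpos_int (Filter.Eventually.of_forall fun x => le_sup_right)]
    exact lintegral_congr fun x => ofReal_eq_ofReal_max (g x)
  have h2 : ∫⁻ x, ENNReal.ofReal (-(g x)) ∂μ = ENNReal.ofReal (∫ x, (-g x) ⊔ 0 ∂μ) := by
    rw [ofReal_integral_eq_lintegral_ofReal hneg_int (Filter.Eventually.of_forall fun x => le_sup_right)]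
    exact lintegral_congr fun x => ofReal_eq_ofReal_max (-g x)
  have key : ∫ x, g x ⊔ 0 ∂μ = ∫ x, g x ∂μ + ∫ x, (-g x) ⊔ 0 ∂μ := by
    rw [← integral_add hint hneg_int]
    congr 1
    funext x
    rcases le_total 0 (g x) with h | h
    · rw [sup_eq_left.mpr h, sup_eq_right.mpr (by linarith)]; ring
    · rw [sup_eq_right.mpr h, sup_eq_left.mpr (by linarith)]; ring
  rw [h1, key]
  calc ENNReal.ofReal (∫ x, g x ∂μ + ∫ x, (-g x) ⊔ 0 ∂μ)
      ≤ ENNReal.ofReal (∫ x, g x ∂μ) + ENNReal.ofReal (∫ x, (-g x) ⊔ 0 ∂μ) :=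
        ENNReal.ofReal_add_le
    _ ≤ ENNReal.ofReal (∫ x, g x ∂μ) + 1 := by
        rw [← h2]; exact add_le_add le_rfl hneg

lemma lintegral_nnorm_le_add {f : α → ℝ} (hf : Measurable f) :
    ∫⁻ x, (‖f x‖₊ : ℝ≥0∞) ∂μ
      ≤ ∫⁻ x, ENNReal.ofReal (f x) ∂μ + ∫⁻ x, ENNReal.ofReal (-(f x)) ∂μ := by
  rw [← lintegral_add_left hf.ennreal_ofReal]
  exact lintegral_mono fun x => le_of_eq (ennnorm_eq_ofReal_add_ofReal_neg (f x))

end Aux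

section CompProd

variable {γ X : Type*} [MeasurableSpace γ] [MeasurableSpace X]
  [MeasurableSpace.CountableOrCountablyGenerated γ X]
  {ν ν' : Measure γ} {κ η : Kernel γ X}

lemma fst_ac [SFinite ν] [SFinite ν'] [IsMarkovKernel κ] [IsMarkovKernel η]
    (h : ν ⊗ₘ κ ≪ ν' ⊗ₘ η) : ν ≪ ν' := by
  rw [← Measure.fst_compProd ν κ, ← Measure.fst_compProd ν' η]
  exact h.map measurable_fst

lemma ae_ac_of_compProd_ac [SFinite ν] [SFinite ν'] [IsFiniteKernel κ] [IsFiniteKernel η]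
    (h : ν ⊗ₘ κ ≪ ν' ⊗ₘ η) : ∀ᵐ c ∂ν, κ c ≪ η c := by
  have hE : MeasurableSet (Kernel.mutuallySingularSet κ η) :=
    Kernel.measurableSet_mutuallySingularSet κ η
  have hslice : ∀ c, Prod.mk c ⁻¹' Kernel.mutuallySingularSet κ η
      = Kernel.mutuallySingularSetSlice κ η c := fun c => rfl
  have hQ : (ν' ⊗ₘ η) (Kernel.mutuallySingularSet κ η) = 0 := by
    rw [Measure.compProd_apply hE]
    simp_rw [hslice, Kernel.measure_mutuallySingularSetSlice]
    simp
  have hP : (ν ⊗ₘ κ) (Kernel.mutuallySingularSet κ η) = 0 := h hQ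
  rw [Measure.compProd_apply hE] at hP
  simp_rw [hslice] at hP
  have h0 : ∀ᵐ c ∂ν, κ c (Kernel.mutuallySingularSetSlice κ η c) = 0 := by
    rw [lintegral_eq_zero_iff] at hP
    · exact hP
    · exact Kernel.measurable_kernel_prodMk_left hE
  filter_upwards [h0] with c hc
  exact (Kernel.singularPart_eq_zero_iff_absolutelyContinuous κ η c).mp
    ((Kernel.singularPart_eq_zero_iff_measure_eq_zero κ η c).mpr hc)

lemma rnDeriv_compProd_ae [IsFiniteMeasure ν] [IsFiniteMeasure ν'] [IsFiniteKernel κ]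
    [IsFiniteKernel η] (hν : ν ≪ ν') (hae : ∀ᵐ c ∂ν, κ c ≪ η c) :
    (fun p => ν.rnDeriv ν' p.1 * Kernel.rnDeriv κ η p.1 p.2)
      =ᵐ[ν' ⊗ₘ η] (ν ⊗ₘ κ).rnDeriv (ν' ⊗ₘ η) := by
  have hgmeas : Measurable (fun p : γ × X => ν.rnDeriv ν' p.1 * Kernel.rnDeriv κ η p.1 p.2) :=
    ((Measure.measurable_rnDeriv ν ν').comp measurable_fst).mul (Kernel.measurable_rnDeriv κ η)
  refine Measure.eq_rnDeriv hgmeas Measure.MutuallySingular.zero_left ?_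
  rw [zero_add]
  ext s hs
  have hF_meas : Measurable fun c => ∫⁻ x in Prod.mk c ⁻¹' s, Kernel.rnDeriv κ η c x ∂η c := by
    have : ∀ c, ∫⁻ x in Prod.mk c ⁻¹' s, Kernel.rnDeriv κ η c x ∂η c
        = ∫⁻ x, s.indicator (fun p => Kernel.rnDeriv κ η p.1 p.2) (c, x) ∂η c := by
      intro c
      rw [← lintegral_indicator (measurable_prodMk_left hs)]
      congr 1
    simp_rw [this]
    exact Measurable.lintegral_kernel_prod_right'
      ((Kernel.measurable_rnDeriv κ η).indicator hs)
  calc (ν ⊗ₘ κ) s = ∫⁻ c, κ c (Prod.mk c ⁻¹' s) ∂ν := Measure.compProd_apply hs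
    _ = ∫⁻ c, ∫⁻ x in Prod.mk c ⁻¹' s, Kernel.rnDeriv κ η c x ∂η c ∂ν := by
        refine lintegral_congr_ae ?_
        filter_upwards [hae] with c hc
        rw [← Kernel.withDensity_rnDeriv_eq hc,
          Kernel.withDensity_apply _ (Kernel.measurable_rnDeriv κ η),
          withDensity_apply _ (measurable_prodMk_left hs)]
    _ = ∫⁻ c, ν.rnDeriv ν' c * ∫⁻ x in Prod.mk c ⁻¹' s, Kernel.rnDeriv κ η c x ∂η c ∂ν' :=
        (MeasureTheory.lintegral_rnDeriv_mul hν hF_meas.aemeasurable).symm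
    _ = ∫⁻ c, ∫⁻ x, s.indicator (fun p => ν.rnDeriv ν' p.1 * Kernel.rnDeriv κ η p.1 p.2) (c, x)
          ∂η c ∂ν' := by
        refine lintegral_congr fun c => ?_
        rw [← lintegral_const_mul _ (Kernel.measurable_rnDeriv_right κ η c),
          ← lintegral_indicator (measurable_prodMk_left hs)]
        refine lintegral_congr fun x => ?_
        simp only [Set.indicator_apply, Set.mem_preimage]
    _ = ((ν' ⊗ₘ η).withDensity
          (fun p => ν.rnDeriv ν' p.1 * Kernel.rnDeriv κ η p.1 p.2)) s := by
        rw [withDensity_apply _ hs, ← lintegral_indicator hs]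
        exact (Measure.lintegral_compProd (hgmeas.indicator hs)).symm

end CompProd

section CompProd2

variable {γ X : Type*} [MeasurableSpace γ] [MeasurableSpace X]
  [MeasurableSpace.CountableOrCountablyGenerated γ X]
  {ν ν' : Measure γ} {κ η : Kernel γ X}

lemma kernel_llr_ae [IsFiniteKernel κ] [IsFiniteKernel η] {c : γ} (hc : κ c ≪ η c) :
    (fun x => Real.log (Kernel.rnDeriv κ η c x).toReal) =ᵐ[κ c] llr (κ c) (η c) := by
  filter_upwards [hc.ae_le (Kernel.rnDeriv_eq_rnDeriv_measure (κ := κ) (η := η))] with x hx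
  rw [llr_def, hx]

lemma llr_compProd_ae [IsFiniteMeasure ν] [IsFiniteMeasure ν'] [IsMarkovKernel κ]
    [IsMarkovKernel η] (h : ν ⊗ₘ κ ≪ ν' ⊗ₘ η) :
    llr (ν ⊗ₘ κ) (ν' ⊗ₘ η) =ᵐ[ν ⊗ₘ κ]
      fun p => llr ν ν' p.1 + Real.log (Kernel.rnDeriv κ η p.1 p.2).toReal := by
  have hν : ν ≪ ν' := fst_ac h
  have hae : ∀ᵐ c ∂ν, κ c ≪ η c := ae_ac_of_compProd_ac h
  have h1 : (fun p : γ × X => ν.rnDeriv ν' p.1 * Kernel.rnDeriv κ η p.1 p.2)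
      =ᵐ[ν ⊗ₘ κ] (ν ⊗ₘ κ).rnDeriv (ν' ⊗ₘ η) :=
    (rnDeriv_compProd_ae hν hae).filter_mono h.ae_le
  have hrnm : Measurable (ν.rnDeriv ν') := Measure.measurable_rnDeriv ν ν'
  have hm2 : MeasurableSet {p : γ × X | 0 < ν.rnDeriv ν' p.1 ∧ ν.rnDeriv ν' p.1 < ⊤} := by
    simp only [Set.setOf_and]
    exact (measurableSet_lt measurable_const (hrnm.comp measurable_fst)).inter
      (measurableSet_lt (hrnm.comp measurable_fst) measurable_const)
  have hm3 : MeasurableSet {p : γ × X |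
      0 < Kernel.rnDeriv κ η p.1 p.2 ∧ Kernel.rnDeriv κ η p.1 p.2 < ⊤} := by
    simp only [Set.setOf_and]
    exact (measurableSet_lt measurable_const (Kernel.measurable_rnDeriv κ η)).inter
      (measurableSet_lt (Kernel.measurable_rnDeriv κ η) measurable_const)
  have h2 : ∀ᵐ p ∂(ν ⊗ₘ κ), 0 < ν.rnDeriv ν' p.1 ∧ ν.rnDeriv ν' p.1 < ⊤ := by
    rw [Measure.ae_compProd_iff hm2]
    filter_upwards [rnDeriv_pos_fin hν] with c hc
    exact Filter.Eventually.of_forall fun x => hc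
  have h3 : ∀ᵐ p ∂(ν ⊗ₘ κ),
      0 < Kernel.rnDeriv κ η p.1 p.2 ∧ Kernel.rnDeriv κ η p.1 p.2 < ⊤ := by
    rw [Measure.ae_compProd_iff hm3]
    filter_upwards [hae] with c hc
    filter_upwards [Kernel.rnDeriv_pos hc, hc.ae_le (Kernel.rnDeriv_lt_top κ η (a := c))] with x h0 ht
    exact ⟨h0, ht⟩
  filter_upwards [h1, h2, h3] with p hp1 hp2 hp3
  simp only [llr_def]
  rw [← hp1, ENNReal.toReal_mul, Real.log_mul]
  · exact (ENNReal.toReal_pos hp2.1.ne' hp2.2.ne).ne'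
  · exact (ENNReal.toReal_pos hp3.1.ne' hp3.2.ne).ne'

lemma measurable_KLdiv_kernel [IsFiniteKernel κ] [IsFiniteKernel η] :
    Measurable fun c => KLdiv (κ c) (η c) := by
  have hfm : Measurable fun p : γ × X => Real.log (Kernel.rnDeriv κ η p.1 p.2).toReal :=
    Real.measurable_log.comp (Kernel.measurable_rnDeriv κ η).ennreal_toReal
  have heq : (fun c => KLdiv (κ c) (η c)) = fun c =>
      if κ c ≪ η c then
        (if ∫⁻ x, (‖Real.log (Kernel.rnDeriv κ η c x).toReal‖₊ : ℝ≥0∞) ∂κ c < ⊤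
          then ENNReal.ofReal (∫ x, Real.log (Kernel.rnDeriv κ η c x).toReal ∂κ c) else ⊤)
      else ⊤ := by
    funext c
    by_cases hc : κ c ≪ η c
    · have hcong : (fun x => Real.log (Kernel.rnDeriv κ η c x).toReal) =ᵐ[κ c] llr (κ c) (η c) :=
        kernel_llr_ae hc
      by_cases hint : Integrable (llr (κ c) (η c)) (κ c)
      · have hint' : Integrable (fun x => Real.log (Kernel.rnDeriv κ η c x).toReal) (κ c) :=
          hint.congr hcong.symm
        rw [if_pos hc, if_pos (show (∫⁻ x, (‖Real.log (Kernel.rnDeriv κ η c x).toReal‖₊ : ℝ≥0∞) ∂κ c) < ⊤ from hint'.2), KLdiv_of_ac_int hc hint,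
          integral_congr_ae hcong.symm]
      · rw [if_pos hc, if_neg, KLdiv_of_not_int hint]
        intro hfin
        exact hint (((integrable_iff_lintegral_nnorm
          (hfm.comp measurable_prodMk_left).aestronglyMeasurable).mpr hfin).congr hcong)
    · rw [if_neg hc, KLdiv_of_not_ac hc]
  rw [heq]
  refine Measurable.ite (Kernel.measurableSet_absolutelyContinuous κ η) ?_ measurable_const
  refine Measurable.ite ?_ ?_ measurable_const
  · exact measurableSet_lt (Measurable.lintegral_kernel_prod_right' hfm.nnnorm.coe_nnreal_ennreal) measurable_const
  · exact hfm.stronglyMeasurable.integral_kernel_prod_right'.measurable.ennreal_ofReal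

theorem KLdiv_compProd_eq [IsProbabilityMeasure ν] [IsMarkovKernel κ] [IsMarkovKernel η] :
    KLdiv (ν ⊗ₘ κ) (ν ⊗ₘ η) = ∫⁻ c, KLdiv (κ c) (η c) ∂ν := by
  set f : γ × X → ℝ := fun p => Real.log (Kernel.rnDeriv κ η p.1 p.2).toReal with hf_def
  have hfm : Measurable f := Real.measurable_log.comp (Kernel.measurable_rnDeriv κ η).ennreal_toReal
  by_cases hac : ν ⊗ₘ κ ≪ ν ⊗ₘ η
  · have hae : ∀ᵐ c ∂ν, κ c ≪ η c := ae_ac_of_compProd_ac hac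
    have hzero : ∀ᵐ p ∂(ν ⊗ₘ κ), llr ν ν p.1 = 0 := by
      rw [Measure.ae_compProd_iff]
      · have : ∀ᵐ c ∂ν, llr ν ν c = 0 := by
          filter_upwards [Measure.rnDeriv_self ν] with c hc
          simp [llr_def, hc]
        filter_upwards [this] with c hc
        exact Filter.Eventually.of_forall fun x => hc
      · exact (measurable_llr ν ν).comp measurable_fst (measurableSet_singleton 0)
    have hllr' : llr (ν ⊗ₘ κ) (ν ⊗ₘ η) =ᵐ[ν ⊗ₘ κ] f := by
      filter_upwards [llr_compProd_ae hac, hzero] with p h1 h2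
      rw [h1, h2, zero_add]
    by_cases hint : Integrable (llr (ν ⊗ₘ κ) (ν ⊗ₘ η)) (ν ⊗ₘ κ)
    · -- finite case
      have hf_int : Integrable f (ν ⊗ₘ κ) := hint.congr hllr'
      have hfc : ∀ᵐ c ∂ν, Integrable (fun x => f (c, x)) (κ c) :=
        ((Measure.integrable_compProd_iff hf_int.aestronglyMeasurable).mp hf_int).1
      have hkl : ∀ᵐ c ∂ν, KLdiv (κ c) (η c) = ENNReal.ofReal (∫ x, f (c, x) ∂κ c) := by
        filter_upwards [hae, hfc] with c hc hci
        have hcong := kernel_llr_ae hc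
        rw [KLdiv_of_ac_int hc (hci.congr hcong), integral_congr_ae hcong.symm]
      have hg_nonneg : ∀ᵐ c ∂ν, 0 ≤ ∫ x, f (c, x) ∂κ c := by
        filter_upwards [hae, hfc] with c hc hci
        rw [integral_congr_ae (kernel_llr_ae hc)]
        exact integral_llr_nonneg' hc (hci.congr (kernel_llr_ae hc))
      have hg_int : Integrable (fun c => ∫ x, f (c, x) ∂κ c) ν := by
        have hnorm := ((Measure.integrable_compProd_iff hf_int.aestronglyMeasurable).mp hf_int).2
        refine hnorm.mono' hfm.stronglyMeasurable.integral_kernel_prod_right'.aestronglyMeasurable ?_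
        refine Filter.Eventually.of_forall fun c => ?_
        exact norm_integral_le_integral_norm _
      rw [KLdiv_of_ac_int hac hint, integral_congr_ae hllr', Measure.integral_compProd hf_int,
        lintegral_congr_ae hkl, ← ofReal_integral_eq_lintegral_ofReal hg_int hg_nonneg]
    · -- infinite case
      rw [KLdiv_of_not_int hint]
      have hf_nint : ¬ Integrable f (ν ⊗ₘ κ) := fun h => hint (h.congr hllr'.symm)
      have hneg_le : ∫⁻ p, ENNReal.ofReal (-(f p)) ∂(ν ⊗ₘ κ) ≤ 1 := by
        rw [Measure.lintegral_compProd (f := fun p => ENNReal.ofReal (-(f p))) hfm.neg.ennreal_ofReal]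
        calc ∫⁻ c, ∫⁻ x, ENNReal.ofReal (-(f (c, x))) ∂κ c ∂ν ≤ ∫⁻ _, 1 ∂ν := by
              refine lintegral_mono_ae ?_
              filter_upwards [hae] with c hc
              have : ∫⁻ x, ENNReal.ofReal (-(f (c, x))) ∂κ c
                  = ∫⁻ x, ENNReal.ofReal (-(llr (κ c) (η c) x)) ∂κ c := by
                refine lintegral_congr_ae ?_
                filter_upwards [kernel_llr_ae hc] with x hx
                have hx' : f (c, x) = llr (κ c) (η c) x := hx
                rw [hx']
              rw [this]
              exact lintegral_ofReal_neg_llr_le hc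
          _ = 1 := by simp
      have htop : ∫⁻ p, ENNReal.ofReal (f p) ∂(ν ⊗ₘ κ) = ⊤ := by
        by_contra hlt
        apply hf_nint
        refine (integrable_iff_lintegral_nnorm hfm.aestronglyMeasurable).mpr ?_
        refine lt_of_le_of_lt (lintegral_nnorm_le_add hfm) ?_
        exact ENNReal.add_lt_top.mpr ⟨lt_top_iff_ne_top.mpr hlt, lt_of_le_of_lt hneg_le one_lt_top⟩
      have hub : ∀ᵐ c ∂ν, ∫⁻ x, ENNReal.ofReal (f (c, x)) ∂κ c ≤ KLdiv (κ c) (η c) + 1 := by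
        filter_upwards [hae] with c hc
        have hcong := kernel_llr_ae hc
        by_cases hci : Integrable (fun x => f (c, x)) (κ c)
        · have hkl : KLdiv (κ c) (η c) = ENNReal.ofReal (∫ x, f (c, x) ∂κ c) := by
            rw [KLdiv_of_ac_int hc (hci.congr hcong), integral_congr_ae hcong.symm]
          rw [hkl]
          refine lintegral_ofReal_le_ofReal_integral_add_one hci ?_
          have : ∫⁻ x, ENNReal.ofReal (-(f (c, x))) ∂κ c
              = ∫⁻ x, ENNReal.ofReal (-(llr (κ c) (η c) x)) ∂κ c := by
            refine lintegral_congr_ae ?_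
            filter_upwards [hcong] with x hx
            have hx' : f (c, x) = llr (κ c) (η c) x := hx
            rw [hx']
          rw [this]
          exact lintegral_ofReal_neg_llr_le hc
        · rw [KLdiv_of_not_int (fun h => hci (h.congr hcong.symm))]
          simp
      have hchain : (⊤ : ℝ≥0∞) ≤ ∫⁻ c, KLdiv (κ c) (η c) ∂ν + 1 := by
        calc (⊤ : ℝ≥0∞) = ∫⁻ p, ENNReal.ofReal (f p) ∂(ν ⊗ₘ κ) := htop.symm
          _ = ∫⁻ c, ∫⁻ x, ENNReal.ofReal (f (c, x)) ∂κ c ∂ν :=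
              Measure.lintegral_compProd hfm.ennreal_ofReal
          _ ≤ ∫⁻ c, (KLdiv (κ c) (η c) + 1) ∂ν := lintegral_mono_ae hub
          _ = ∫⁻ c, KLdiv (κ c) (η c) ∂ν + 1 := by
              rw [lintegral_add_right _ measurable_const]
              simp
      symm
      by_contra hne
      have hlt : ∫⁻ c, KLdiv (κ c) (η c) ∂ν + 1 < ⊤ :=
        ENNReal.add_lt_top.mpr ⟨lt_top_iff_ne_top.mpr hne, one_lt_top⟩
      exact absurd (lt_of_le_of_lt hchain hlt) (lt_irrefl ⊤)
  · rw [KLdiv_of_not_ac hac]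
    have hA : MeasurableSet {c | κ c ≪ η c} := Kernel.measurableSet_absolutelyContinuous κ η
    have hnae : ¬ ∀ᵐ c ∂ν, κ c ≪ η c := fun hae =>
      hac (Measure.AbsolutelyContinuous.compProd (Measure.AbsolutelyContinuous.refl ν) hae)
    have hpos : ν {c | κ c ≪ η c}ᶜ ≠ 0 := by
      rw [Set.compl_setOf]
      intro h0
      exact hnae (ae_iff.mpr h0)
    symm
    rw [eq_top_iff]
    calc (⊤ : ℝ≥0∞) = ∫⁻ _ in {c | κ c ≪ η c}ᶜ, (⊤ : ℝ≥0∞) ∂ν := by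
          rw [setLIntegral_const, ENNReal.top_mul hpos]
      _ ≤ ∫⁻ c in {c | κ c ≪ η c}ᶜ, KLdiv (κ c) (η c) ∂ν := by
          refine setLIntegral_mono measurable_KLdiv_kernel fun c hc => ?_
          rw [KLdiv_of_not_ac hc]
      _ ≤ ∫⁻ c, KLdiv (κ c) (η c) ∂ν := setLIntegral_le_lintegral _ _

end CompProd2

section DPI

theorem KLdiv_fst_le {γ X : Type*} [MeasurableSpace γ] [MeasurableSpace X]
    [StandardBorelSpace γ] [StandardBorelSpace X] [Nonempty X]
    (ρ₁ ρ₂ : Measure (γ × X)) [IsProbabilityMeasure ρ₁] [IsProbabilityMeasure ρ₂] :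
    KLdiv ρ₁.fst ρ₂.fst ≤ KLdiv ρ₁ ρ₂ := by
  by_cases h : ρ₁ ≪ ρ₂ ∧ Integrable (llr ρ₁ ρ₂) ρ₁
  swap
  · rw [KLdiv_of_not h]; exact le_top
  obtain ⟨hac, hint⟩ := h
  set ν := ρ₁.fst with hν_def
  set ν' := ρ₂.fst with hν'_def
  set κ := ρ₁.condKernel with hκ_def
  set η := ρ₂.condKernel with hη_def
  have hd1 : ν ⊗ₘ κ = ρ₁ := ρ₁.disintegrate ρ₁.condKernel
  have hd2 : ν' ⊗ₘ η = ρ₂ := ρ₂.disintegrate ρ₂.condKernel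
  have hac' : ν ⊗ₘ κ ≪ ν' ⊗ₘ η := by rw [hd1, hd2]; exact hac
  have hν : ν ≪ ν' := fst_ac hac'
  have hae : ∀ᵐ c ∂ν, κ c ≪ η c := ae_ac_of_compProd_ac hac'
  have hllr : llr ρ₁ ρ₂ =ᵐ[ρ₁]
      fun p => llr ν ν' p.1 + Real.log (Kernel.rnDeriv κ η p.1 p.2).toReal := by
    have := llr_compProd_ae hac'
    rw [hd1, hd2] at this
    exact this
  set f : γ × X → ℝ :=
    fun p => llr ν ν' p.1 + Real.log (Kernel.rnDeriv κ η p.1 p.2).toReal with hf_def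
  have hfm : Measurable f := ((measurable_llr ν ν').comp measurable_fst).add
    (Real.measurable_log.comp (Kernel.measurable_rnDeriv κ η).ennreal_toReal)
  have hf_int : Integrable f ρ₁ := hint.congr hllr
  have hf_int' : Integrable f (ν ⊗ₘ κ) := by rw [hd1]; exact hf_int
  have hfc : ∀ᵐ c ∂ν, Integrable (fun x => f (c, x)) (κ c) :=
    ((Measure.integrable_compProd_iff hf_int'.aestronglyMeasurable).mp hf_int').1
  have hw : ∀ᵐ c ∂ν, 0 ≤ ∫ x, Real.log (Kernel.rnDeriv κ η c x).toReal ∂κ c ∧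
      Integrable (fun x => Real.log (Kernel.rnDeriv κ η c x).toReal) (κ c) := by
    filter_upwards [hae, hfc] with c hc hci
    have heq : (fun x => Real.log (Kernel.rnDeriv κ η c x).toReal)
        = fun x => f (c, x) - llr ν ν' c := by
      funext x
      simp [hf_def]
    have hci' : Integrable (fun x => Real.log (Kernel.rnDeriv κ η c x).toReal) (κ c) := by
      rw [heq]
      exact hci.sub (integrable_const _)
    refine ⟨?_, hci'⟩
    rw [integral_congr_ae (kernel_llr_ae hc)]
    exact integral_llr_nonneg' hc (hci'.congr (kernel_llr_ae hc))
  set G : γ → ℝ := fun c => ∫ x, f (c, x) ∂κ c with hG_def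
  have hGsm : StronglyMeasurable G := hfm.stronglyMeasurable.integral_kernel_prod_right'
  have hG_int : Integrable G ν := by
    have hnorm := ((Measure.integrable_compProd_iff hf_int'.aestronglyMeasurable).mp hf_int').2
    exact hnorm.mono' hGsm.aestronglyMeasurable
      (Filter.Eventually.of_forall fun c => norm_integral_le_integral_norm _)
  have hGc : ∀ᵐ c ∂ν, G c
      = llr ν ν' c + ∫ x, Real.log (Kernel.rnDeriv κ η c x).toReal ∂κ c := by
    filter_upwards [hfc, hw] with c hci hwc
    rw [hG_def]
    simp only [hf_def]
    rw [integral_add (integrable_const _) hwc.2, integral_const]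
    simp
  have hle : ∀ᵐ c ∂ν, llr ν ν' c ≤ G c := by
    filter_upwards [hGc, hw] with c h1 h2
    rw [h1]
    linarith [h2.1]
  have hllrν_int : Integrable (llr ν ν') ν := by
    refine (integrable_iff_lintegral_nnorm (measurable_llr ν ν').aestronglyMeasurable).mpr ?_
    refine lt_of_le_of_lt (lintegral_nnorm_le_add (measurable_llr ν ν')) ?_
    have h1 : ∫⁻ c, ENNReal.ofReal (llr ν ν' c) ∂ν ≤ ∫⁻ c, (‖G c‖₊ : ℝ≥0∞) ∂ν := by
      refine lintegral_mono_ae ?_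
      filter_upwards [hle] with c hc
      calc ENNReal.ofReal (llr ν ν' c) ≤ ENNReal.ofReal (G c) := ENNReal.ofReal_le_ofReal hc
        _ ≤ (‖G c‖₊ : ℝ≥0∞) := Real.ofReal_le_enorm _
    exact ENNReal.add_lt_top.mpr ⟨lt_of_le_of_lt h1 hG_int.2,
      lt_of_le_of_lt (lintegral_ofReal_neg_llr_le hν) one_lt_top⟩
  rw [KLdiv_of_ac_int hν hllrν_int, KLdiv_of_ac_int hac hint]
  apply ENNReal.ofReal_le_ofReal
  calc ∫ c, llr ν ν' c ∂ν ≤ ∫ c, G c ∂ν := integral_mono_ae hllrν_int hG_int hle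
    _ = ∫ p, f p ∂(ν ⊗ₘ κ) := (Measure.integral_compProd hf_int').symm
    _ = ∫ p, f p ∂ρ₁ := by rw [hd1]
    _ = ∫ p, llr ρ₁ ρ₂ p ∂ρ₁ := (integral_congr_ae hllr).symm

theorem KLdiv_map_embedding_le {α β : Type*} [MeasurableSpace α] [MeasurableSpace β]
    (P Q : Measure α) [IsProbabilityMeasure P] [IsProbabilityMeasure Q]
    {e : α → β} (he : MeasurableEmbedding e) :
    KLdiv (P.map e) (Q.map e) ≤ KLdiv P Q := by
  by_cases h : P ≪ Q ∧ Integrable (llr P Q) P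
  swap
  · rw [KLdiv_of_not h]; exact le_top
  obtain ⟨hac, hint⟩ := h
  have hac' : P.map e ≪ Q.map e := hac.map he.measurable
  have hcomp : (fun x => llr (P.map e) (Q.map e) (e x)) =ᵐ[P] llr P Q := by
    filter_upwards [hac.ae_le (he.rnDeriv_map P Q)] with x hx
    simp only [llr_def]
    rw [hx]
  have hint' : Integrable (llr (P.map e) (Q.map e)) (P.map e) := by
    rw [he.integrable_map_iff]
    exact hint.congr hcomp.symm
  rw [KLdiv_of_ac_int hac' hint', KLdiv_of_ac_int hac hint]
  apply le_of_eq
  apply congrArg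
  rw [integral_map he.measurable.aemeasurable (stronglyMeasurable_llr _ _).aestronglyMeasurable]
  exact integral_congr_ae hcomp

theorem KLdiv_map_le {α β : Type*} [MeasurableSpace α] [MeasurableSpace β]
    [StandardBorelSpace α] [Nonempty α] [StandardBorelSpace β]
    (P Q : Measure α) [IsProbabilityMeasure P] [IsProbabilityMeasure Q]
    {T : α → β} (hT : Measurable T) :
    KLdiv (P.map T) (Q.map T) ≤ KLdiv P Q := by
  have hS : Measurable fun x : α => (T x, x) := hT.prodMk measurable_id
  have hSinj : Function.Injective fun x : α => (T x, x) := fun a b hab => congrArg Prod.snd hab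
  have he : MeasurableEmbedding fun x : α => (T x, x) := hS.measurableEmbedding hSinj
  have h1 : ∀ R : Measure α, R.map T = (R.map fun x => (T x, x)).fst := by
    intro R
    ext s hs
    rw [Measure.fst_apply hs, Measure.map_apply hS (measurable_fst hs), Measure.map_apply hT hs]
    rfl
  haveI : IsProbabilityMeasure (P.map fun x : α => (T x, x)) :=
    Measure.isProbabilityMeasure_map hS.aemeasurable
  haveI : IsProbabilityMeasure (Q.map fun x : α => (T x, x)) :=
    Measure.isProbabilityMeasure_map hS.aemeasurable
  rw [h1 P, h1 Q]
  calc KLdiv (P.map fun x => (T x, x)).fst (Q.map fun x => (T x, x)).fst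
      ≤ KLdiv (P.map fun x => (T x, x)) (Q.map fun x => (T x, x)) := KLdiv_fst_le _ _
    _ ≤ KLdiv P Q := KLdiv_map_embedding_le P Q he

end DPI


/-- Conditional mutual information
`I(A;B|C) = E_{c ∼ P_C}[ KL( P_{A,B|C=c} ‖ P_{A|C=c} × P_{B|C=c} ) ]`,
defined via regular conditional distributions.  (When `C` is a degenerate random variable this
reduces to the mutual information `I(A;B)`.) -/
noncomputable def condMI {Ω α β γ : Type*} [MeasurableSpace Ω]
    [MeasurableSpace α] [StandardBorelSpace α] [Nonempty α]
    [MeasurableSpace β] [StandardBorelSpace β] [Nonempty β]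
    [MeasurableSpace γ]
    (μ : Measure Ω) [IsFiniteMeasure μ] (A : Ω → α) (B : Ω → β) (C : Ω → γ) : ℝ≥0∞ :=
  ∫⁻ c, KLdiv (condDistrib (fun ω => (A ω, B ω)) C μ c)
      ((condDistrib A C μ c).prod (condDistrib B C μ c)) ∂(μ.map C)


section App2


variable {Ω' β' γ'' Ω0 : Type*}

lemma compProd_map_condDistrib' {α β Ω : Type*} [MeasurableSpace α] [MeasurableSpace β]
    [MeasurableSpace Ω] [StandardBorelSpace Ω] [Nonempty Ω]
    {μ : Measure α} [IsFiniteMeasure μ] {X : α → β} {Y : α → Ω}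
    (hX : Measurable X) (hY : Measurable Y) :
    (μ.map X) ⊗ₘ condDistrib Y X μ = μ.map fun a => (X a, Y a) := by
  haveI : IsFiniteMeasure (μ.map fun a => (X a, Y a)) :=
    Measure.isFiniteMeasure_map μ _
  have heq : μ.map X = (μ.map fun a => (X a, Y a)).fst := by
    ext s hs
    rw [Measure.map_apply hX hs, Measure.fst_apply hs,
      Measure.map_apply (hX.prodMk hY) (measurable_fst hs)]
    rfl
  rw [heq, condDistrib]
  exact (μ.map fun a => (X a, Y a)).disintegrate (μ.map fun a => (X a, Y a)).condKernel

lemma condDistrib_of_indep {α β Ω : Type*} [MeasurableSpace α] [MeasurableSpace β]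
    [MeasurableSpace Ω] [StandardBorelSpace Ω] [Nonempty Ω]
    {μ : Measure α} [IsProbabilityMeasure μ] {X : α → β} {Y : α → Ω}
    (hX : Measurable X) (hY : Measurable Y) (hind : IndepFun X Y μ) :
    ∀ᵐ c ∂(μ.map X), condDistrib Y X μ c = μ.map Y := by
  haveI : IsProbabilityMeasure (μ.map Y) := Measure.isProbabilityMeasure_map hY.aemeasurable
  have hmap : μ.map (fun a => (X a, Y a)) = (μ.map X) ⊗ₘ Kernel.const β (μ.map Y) := by
    rw [Measure.compProd_const]
    exact (indepFun_iff_map_prod_eq_prod_map_map hX.aemeasurable hY.aemeasurable).mp hind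
  filter_upwards [condDistrib_ae_eq_of_measure_eq_compProd X hY.aemeasurable
    hmap] with c hc
  rw [hc]
  rfl

lemma condMI_eq_KLdiv {Ω 𝒲 𝒵 γ : Type*} [MeasurableSpace Ω]
    [MeasurableSpace 𝒲] [StandardBorelSpace 𝒲] [Nonempty 𝒲]
    [MeasurableSpace 𝒵] [StandardBorelSpace 𝒵] [Nonempty 𝒵]
    [MeasurableSpace γ]
    (μ : Measure Ω) [IsProbabilityMeasure μ] {A : Ω → 𝒲} {B : Ω → 𝒵} {C : Ω → γ}
    (hA : Measurable A) (hB : Measurable B) (hC : Measurable C)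
    (hind : IndepFun C B μ) :
    condMI μ A B C = KLdiv (μ.map fun ω => (C ω, (A ω, B ω)))
      ((μ.map C) ⊗ₘ ((condDistrib A C μ) ×ₖ Kernel.const γ (μ.map B))) := by
  haveI : IsProbabilityMeasure (μ.map B) := Measure.isProbabilityMeasure_map hB.aemeasurable
  haveI : IsProbabilityMeasure (μ.map C) := Measure.isProbabilityMeasure_map hC.aemeasurable
  have h1 : ∀ᵐ c ∂(μ.map C), condDistrib B C μ c = μ.map B :=
    condDistrib_of_indep hC hB hind
  have h2 : condMI μ A B C = ∫⁻ c, KLdiv (condDistrib (fun ω => (A ω, B ω)) C μ c)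
      (((condDistrib A C μ) ×ₖ Kernel.const γ (μ.map B)) c) ∂(μ.map C) := by
    unfold condMI
    refine lintegral_congr_ae ?_
    filter_upwards [h1] with c hc
    rw [hc, Kernel.prod_apply, Kernel.const_apply]
  rw [h2, ← KLdiv_compProd_eq, compProd_map_condDistrib' hC (hA.prodMk hB)]

lemma compProd_prod_const {γ 𝒲 𝒵 : Type*} [MeasurableSpace γ] [MeasurableSpace 𝒲]
    [MeasurableSpace 𝒵] (ν : Measure γ) [SFinite ν] (κ : Kernel γ 𝒲) [IsSFiniteKernel κ]
    (β : Measure 𝒵) [SFinite β] :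
    ν ⊗ₘ (κ ×ₖ Kernel.const γ β)
      = ((ν ⊗ₘ κ).prod β).map (fun p => (p.1.1, (p.1.2, p.2))) := by
  have hmeas : Measurable fun p : (γ × 𝒲) × 𝒵 => (p.1.1, (p.1.2, p.2)) :=
    (measurable_fst.comp measurable_fst).prodMk
      ((measurable_snd.comp measurable_fst).prodMk measurable_snd)
  ext s hs
  rw [Measure.compProd_apply hs, Measure.map_apply hmeas hs,
    Measure.prod_apply (hmeas hs),
    Measure.lintegral_compProd (measurable_measure_prodMk_left (hmeas hs))]
  refine lintegral_congr fun c => ?_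
  rw [Kernel.prod_apply, Measure.prod_apply (measurable_prodMk_left hs)]
  rfl



end App2

/-- if `Z_1, …, Z_N` are mutually independent, then for each `i`,
`I(W; Z_i | S^{i−1}) ≤ I(W; Z_i | S^{−i})`, where `S^{i−1} = (Z_1, …, Z_{i−1})` and
`S^{−i}` is the tuple of all samples except `Z_i`. -/
theorem stmt10
    {𝒵 𝒲 : Type*}
    [MeasurableSpace 𝒵] [StandardBorelSpace 𝒵] [Nonempty 𝒵]
    [MeasurableSpace 𝒲] [StandardBorelSpace 𝒲] [Nonempty 𝒲]
    {Ω : Type*} [MeasurableSpace Ω] (μ : Measure Ω) [IsProbabilityMeasure μ]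
    (N : ℕ) (W : Ω → 𝒲) (Z : Fin N → Ω → 𝒵)
    (hW : Measurable W) (hZ : ∀ i, Measurable (Z i))
    (hindep : iIndepFun (m := fun _ : Fin N => ‹MeasurableSpace 𝒵›) Z μ)
    (i : Fin N) :
    condMI μ W (Z i) (fun ω => fun k : Fin i.val => Z (Fin.castLE i.isLt.le k) ω) ≤
      condMI μ W (Z i) (fun ω => fun k : {k : Fin N // k ≠ i} => Z k ω) := by
  classical
  set B : Ω → 𝒵 := Z i with hB_def
  set C' : Ω → ({k : Fin N // k ≠ i} → 𝒵) := fun ω => fun k => Z k ω with hC'_def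
  set C : Ω → (Fin i.val → 𝒵) := fun ω => fun k => Z (Fin.castLE i.isLt.le k) ω with hC_def
  have hfne : ∀ k : Fin i.val, Fin.castLE i.isLt.le k ≠ i := by
    intro k hk
    have hv : (Fin.castLE i.isLt.le k).val = i.val := congrArg Fin.val hk
    simp only [Fin.coe_castLE] at hv
    exact absurd hv k.isLt.ne
  set f : ({k : Fin N // k ≠ i} → 𝒵) → (Fin i.val → 𝒵) :=
    fun g k => g ⟨Fin.castLE i.isLt.le k, hfne k⟩ with hf_def
  have hf : Measurable f := measurable_pi_lambda _ fun k => measurable_pi_apply _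
  have hC' : Measurable C' := measurable_pi_lambda _ fun k => hZ _
  have hC : Measurable C := measurable_pi_lambda _ fun k => hZ _
  have hB : Measurable B := hZ i
  -- independence of the conditioning variables from B
  have hind' : IndepFun C' B μ := by
    have h2 : IndepFun (fun ω => fun k : ({i}ᶜ : Finset (Fin N)) => Z k ω)
        (fun ω => fun k : ({i} : Finset (Fin N)) => Z k ω) μ :=
      hindep.indepFun_finset ({i}ᶜ) {i} disjoint_compl_left hZ
    have hφ : Measurable fun g : (({i}ᶜ : Finset (Fin N)) → 𝒵) =>
        (fun k : {k : Fin N // k ≠ i} => g ⟨k.1, by simp [k.2]⟩) :=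
      measurable_pi_lambda _ fun k => measurable_pi_apply _
    have hψ : Measurable fun g : (({i} : Finset (Fin N)) → 𝒵) =>
        g ⟨i, Finset.mem_singleton_self i⟩ := measurable_pi_apply _
    exact h2.comp hφ hψ
  have hindC : IndepFun C B μ := hind'.comp hf measurable_id
  haveI : IsProbabilityMeasure (μ.map B) := Measure.isProbabilityMeasure_map hB.aemeasurable
  haveI : IsProbabilityMeasure (μ.map C) := Measure.isProbabilityMeasure_map hC.aemeasurable
  haveI : IsProbabilityMeasure (μ.map C') := Measure.isProbabilityMeasure_map hC'.aemeasurable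
  rw [condMI_eq_KLdiv μ hW hB hC hindC, condMI_eq_KLdiv μ hW hB hC' hind']
  set T : ({k : Fin N // k ≠ i} → 𝒵) × (𝒲 × 𝒵) → (Fin i.val → 𝒵) × (𝒲 × 𝒵) :=
    fun p => (f p.1, p.2) with hT_def
  have hT : Measurable T := (hf.comp measurable_fst).prodMk measurable_snd
  have hmapP : (μ.map fun ω => (C' ω, (W ω, B ω))).map T
      = μ.map fun ω => (C ω, (W ω, B ω)) := by
    rw [Measure.map_map hT (hC'.prodMk (hW.prodMk hB))]
    rfl
  have hg : Measurable fun p : ({k : Fin N // k ≠ i} → 𝒵) × 𝒲 => (f p.1, p.2) :=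
    (hf.comp measurable_fst).prodMk measurable_snd
  have hassoc : Measurable fun p : ((Fin i.val → 𝒵) × 𝒲) × 𝒵 => (p.1.1, (p.1.2, p.2)) :=
    (measurable_fst.comp measurable_fst).prodMk
      ((measurable_snd.comp measurable_fst).prodMk measurable_snd)
  have hassoc' : Measurable fun p : (({k : Fin N // k ≠ i} → 𝒵) × 𝒲) × 𝒵 =>
      (p.1.1, (p.1.2, p.2)) :=
    (measurable_fst.comp measurable_fst).prodMk
      ((measurable_snd.comp measurable_fst).prodMk measurable_snd)
  have hmapQ : ((μ.map C') ⊗ₘ ((condDistrib W C' μ) ×ₖ Kernel.const _ (μ.map B))).map T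
      = (μ.map C) ⊗ₘ ((condDistrib W C μ) ×ₖ Kernel.const _ (μ.map B)) := by
    rw [compProd_prod_const, compProd_prod_const,
      compProd_map_condDistrib' hC' hW, compProd_map_condDistrib' hC hW,
      Measure.map_map hT hassoc']
    have hstep : μ.map (fun ω => (C ω, W ω))
        = (μ.map fun ω => (C' ω, W ω)).map (fun p => (f p.1, p.2)) := by
      rw [Measure.map_map hg (hC'.prodMk hW)]
      rfl
    have hprod : ((μ.map fun ω => (C' ω, W ω)).map (fun p => (f p.1, p.2))).prod (μ.map B)
        = ((μ.map fun ω => (C' ω, W ω)).prod (μ.map B)).map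
            (Prod.map (fun p => (f p.1, p.2)) id) := by
      rw [← Measure.map_prod_map _ _ hg measurable_id, Measure.map_id]
    rw [hstep, hprod, Measure.map_map hassoc (hg.prodMap measurable_id)]
    rfl
  calc KLdiv (μ.map fun ω => (C ω, (W ω, B ω)))
        ((μ.map C) ⊗ₘ ((condDistrib W C μ) ×ₖ Kernel.const _ (μ.map B)))
      = KLdiv ((μ.map fun ω => (C' ω, (W ω, B ω))).map T)
          (((μ.map C') ⊗ₘ ((condDistrib W C' μ) ×ₖ Kernel.const _ (μ.map B))).map T) := by
        rw [hmapP, hmapQ]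
    _ ≤ KLdiv (μ.map fun ω => (C' ω, (W ω, B ω)))
          ((μ.map C') ⊗ₘ ((condDistrib W C' μ) ×ₖ Kernel.const _ (μ.map B))) := by
        haveI : IsProbabilityMeasure (μ.map fun ω => (C' ω, (W ω, B ω))) :=
          Measure.isProbabilityMeasure_map ((hC'.prodMk (hW.prodMk hB))).aemeasurable
        exact KLdiv_map_le _ _ hT
end

section
/- For every i ∈ {1,…,N}, it holds that I(W; U_i | Z̃_i, Z̃_{i+N}) ≤ I(W; U_i | S̃). -/
open MeasureTheory ProbabilityTheory ENNReal Classical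

/-! ### Auxiliary lemmas -/

instance inst_s11 : IsProbabilityMeasure bern := by unfold bern; infer_instance

namespace StmtAux

open Real Filter

section Gibbs

variable {T : Type*} [MeasurableSpace T]

lemma integrable_of_bddm {P : Measure T} [IsFiniteMeasure P] {g : T → ℝ} (hg : Measurable g)
    {c : ℝ} (hc : ∀ t, |g t| ≤ c) : Integrable g P :=
  (integrable_const c).mono' hg.aestronglyMeasurable
    (Filter.Eventually.of_forall fun t => by simpa [Real.norm_eq_abs] using hc t)

/-- Gibbs' inequality / easy direction of the Donsker-Varadhan variational formula. -/
lemma gibbs (P Q : Measure T) [IsProbabilityMeasure P] [IsProbabilityMeasure Q]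
    (hPQ : P ≪ Q) (hint : Integrable (llr P Q) P) {g : T → ℝ} (hg : Measurable g)
    {c : ℝ} (hgc : ∀ t, |g t| ≤ c) :
    ∫ t, g t ∂P ≤ ∫ t, llr P Q t ∂P + Real.log (∫ t, Real.exp (g t) ∂Q) := by
  have hexpg_m : Measurable fun t => Real.exp (g t) := hg.exp
  have hexpg_int : Integrable (fun t => Real.exp (g t)) Q := by
    refine integrable_of_bddm hexpg_m (c := Real.exp c) fun t => ?_
    rw [abs_of_pos (Real.exp_pos _)]
    exact Real.exp_le_exp.2 ((le_abs_self _).trans (hgc t))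
  set Z := ∫ t, Real.exp (g t) ∂Q with hZ
  have hZ_pos : 0 < Z := by
    have h1 : ∫ (_ : T), Real.exp (-c) ∂Q ≤ Z :=
      integral_mono (integrable_const _) hexpg_int fun t =>
        Real.exp_le_exp.2 (neg_le_of_abs_le (hgc t))
    simp only [integral_const, measure_univ, probReal_univ, smul_eq_mul, one_mul] at h1
    exact lt_of_lt_of_le (Real.exp_pos _) h1
  have hg_int : Integrable g P := integrable_of_bddm hg hgc
  set h : T → ℝ := fun t => g t - llr P Q t - Real.log Z with hh
  have hh_m : Measurable h := (hg.sub (measurable_llr _ _)).sub measurable_const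
  have hh_int : Integrable h P := (hg_int.sub hint).sub (integrable_const _)
  have hA : ∫⁻ t, ENNReal.ofReal (Real.exp (h t)) ∂P ≤ 1 := by
    rw [← MeasureTheory.lintegral_rnDeriv_mul hPQ hh_m.exp.ennreal_ofReal.aemeasurable]
    have hb : ∀ᵐ t ∂Q, P.rnDeriv Q t * ENNReal.ofReal (Real.exp (h t))
        ≤ ENNReal.ofReal (Real.exp (g t) * Z⁻¹) := by
      filter_upwards [Measure.rnDeriv_lt_top P Q] with t ht
      by_cases h0 : P.rnDeriv Q t = 0
      · simp [h0]
      · have htR : 0 < (P.rnDeriv Q t).toReal := ENNReal.toReal_pos h0 ht.ne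
        rw [← ENNReal.ofReal_toReal ht.ne, ← ENNReal.ofReal_mul ENNReal.toReal_nonneg]
        apply ENNReal.ofReal_le_ofReal
        have hexp : Real.exp (h t) = Real.exp (g t) / (P.rnDeriv Q t).toReal / Z := by
          rw [hh]
          simp only [llr]
          rw [Real.exp_sub, Real.exp_sub, Real.exp_log htR, Real.exp_log hZ_pos]
        rw [hexp]
        rw [div_div]
        apply le_of_eq
        field_simp
    calc ∫⁻ t, P.rnDeriv Q t * ENNReal.ofReal (Real.exp (h t)) ∂Q
        ≤ ∫⁻ t, ENNReal.ofReal (Real.exp (g t) * Z⁻¹) ∂Q := lintegral_mono_ae hb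
      _ = ∫⁻ t, ENNReal.ofReal (Real.exp (g t)) * ENNReal.ofReal Z⁻¹ ∂Q := by
          simp_rw [ENNReal.ofReal_mul (Real.exp_pos _).le]
      _ = (∫⁻ t, ENNReal.ofReal (Real.exp (g t)) ∂Q) * ENNReal.ofReal Z⁻¹ :=
          lintegral_mul_const _ hexpg_m.ennreal_ofReal
      _ = ENNReal.ofReal Z * ENNReal.ofReal Z⁻¹ := by
          rw [← ofReal_integral_eq_lintegral_ofReal hexpg_int
            (Filter.Eventually.of_forall fun t => (Real.exp_pos _).le)]
      _ = 1 := by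
          rw [← ENNReal.ofReal_mul hZ_pos.le, mul_inv_cancel₀ hZ_pos.ne', ENNReal.ofReal_one]
  have hexp_h_int : Integrable (fun t => Real.exp (h t)) P := by
    refine ⟨hh_m.exp.aestronglyMeasurable, ?_⟩
    rw [hasFiniteIntegral_iff_ofReal (Filter.Eventually.of_forall fun t => (Real.exp_pos _).le)]
    exact lt_of_le_of_lt hA ENNReal.one_lt_top
  have hint_exp : ∫ t, Real.exp (h t) ∂P ≤ 1 := by
    rw [integral_eq_lintegral_of_nonneg_ae
      (Filter.Eventually.of_forall fun t => (Real.exp_pos _).le) hh_m.exp.aestronglyMeasurable]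
    calc (∫⁻ t, ENNReal.ofReal (Real.exp (h t)) ∂P).toReal ≤ (1 : ℝ≥0∞).toReal :=
          ENNReal.toReal_mono ENNReal.one_ne_top hA
      _ = 1 := by simp
  have hle : ∫ t, h t ∂P ≤ 0 := by
    have h1 : ∫ t, h t ∂P ≤ ∫ t, (Real.exp (h t) - 1) ∂P := by
      refine integral_mono hh_int (hexp_h_int.sub (integrable_const 1)) fun t => ?_
      have := Real.add_one_le_exp (h t); linarith
    rw [integral_sub hexp_h_int (integrable_const 1)] at h1
    simp only [integral_const, measure_univ, probReal_univ, smul_eq_mul, one_mul] at h1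
    linarith
  have hsplit : ∫ t, h t ∂P = ∫ t, g t ∂P - ∫ t, llr P Q t ∂P - Real.log Z := by
    have hgl : Integrable (fun t => g t - llr P Q t) P := hg_int.sub hint
    have e1 : ∫ t, (g t - llr P Q t - Real.log Z) ∂P
        = ∫ t, (g t - llr P Q t) ∂P - ∫ (_ : T), Real.log Z ∂P :=
      integral_sub hgl (integrable_const _)
    have e2 : ∫ t, (g t - llr P Q t) ∂P = ∫ t, g t ∂P - ∫ t, llr P Q t ∂P :=
      integral_sub hg_int hint
    have e3 : ∫ (_ : T), Real.log Z ∂P = Real.log Z := by simp [measure_univ]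
    calc ∫ t, h t ∂P = ∫ t, (g t - llr P Q t - Real.log Z) ∂P := rfl
      _ = ∫ t, g t ∂P - ∫ t, llr P Q t ∂P - Real.log Z := by rw [e1, e2, e3]
  rw [hsplit] at hle
  linarith

lemma integral_llr_nonneg (P Q : Measure T) [IsProbabilityMeasure P] [IsProbabilityMeasure Q]
    (hPQ : P ≪ Q) (hint : Integrable (llr P Q) P) : 0 ≤ ∫ t, llr P Q t ∂P := by
  have := gibbs P Q hPQ hint (g := fun _ => 0) measurable_const (c := 0)
    (fun t => by simp)
  simpa using this

/-- Jensen's inequality for the logarithm, proven via `log x ≤ x - 1`. -/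
lemma integral_log_le {S : Type*} [MeasurableSpace S] (pr : Measure S) [IsProbabilityMeasure pr]
    {F : S → ℝ} (hF : Integrable F pr) (hlog : Integrable (fun s => Real.log (F s)) pr)
    {ε : ℝ} (hε : 0 < ε) (hεF : ∀ s, ε ≤ F s) :
    ∫ s, Real.log (F s) ∂pr ≤ Real.log (∫ s, F s ∂pr) := by
  set Z := ∫ s, F s ∂pr with hZdef
  have hZ : ε ≤ Z := by
    have := integral_mono (integrable_const ε) hF hεF
    simpa [integral_const, measure_univ] using this
  have hZpos : 0 < Z := lt_of_lt_of_le hε hZ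
  have key : ∀ s, Real.log (F s) - Real.log Z ≤ F s / Z - 1 := fun s => by
    have hFs : 0 < F s := lt_of_lt_of_le hε (hεF s)
    have h1 : 0 < F s / Z := div_pos hFs hZpos
    have h2 := Real.log_le_sub_one_of_pos h1
    rwa [Real.log_div hFs.ne' hZpos.ne'] at h2
  have h3 : ∫ s, (Real.log (F s) - Real.log Z) ∂pr ≤ ∫ s, (F s / Z - 1) ∂pr :=
    integral_mono (hlog.sub (integrable_const _)) ((hF.div_const Z).sub (integrable_const 1)) key
  rw [integral_sub hlog (integrable_const _),
    integral_sub (hF.div_const Z) (integrable_const 1), integral_div] at h3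
  simp only [integral_const, measure_univ, probReal_univ, smul_eq_mul, one_mul] at h3
  rw [← hZdef, div_self hZpos.ne'] at h3
  linarith

end Gibbs

section KernelKL

variable {S T : Type*} [MeasurableSpace S] [MeasurableSpace T]

/-- A jointly measurable version of the log-likelihood ratio between two kernels. -/
noncomputable def kllr [MeasurableSpace.CountablyGenerated T] (P Q : Kernel S T) (s : S) (t : T) : ℝ :=
  Real.log ((Kernel.rnDeriv P Q s t).toReal)

lemma measurable_kllr [MeasurableSpace.CountablyGenerated T] (P Q : Kernel S T) : Measurable (Function.uncurry (kllr P Q)) :=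
  (Kernel.measurable_rnDeriv P Q).ennreal_toReal.log

lemma measurable_kllr_right [MeasurableSpace.CountablyGenerated T] (P Q : Kernel S T) (s : S) : Measurable (kllr P Q s) :=
  (measurable_kllr P Q).of_uncurry_left

lemma kllr_ae_eq [MeasurableSpace.CountablyGenerated T] (P Q : Kernel S T) [IsFiniteKernel P] [IsFiniteKernel Q] {s : S}
    (hac : P s ≪ Q s) : kllr P Q s =ᵐ[P s] llr (P s) (Q s) := by
  filter_upwards [hac.ae_le (Kernel.rnDeriv_eq_rnDeriv_measure (κ := P) (η := Q) (a := s))]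
    with t ht
  rw [kllr, llr, ht]

/-- The set of points where the kernel KL divergence is "finite-form". -/
def goodSet [MeasurableSpace.CountablyGenerated T] (P Q : Kernel S T) : Set S :=
  {s | P s ≪ Q s ∧ Integrable (kllr P Q s) (P s)}

lemma measurableSet_goodSet [MeasurableSpace.CountablyGenerated T] (P Q : Kernel S T) [IsFiniteKernel P] [IsFiniteKernel Q] :
    MeasurableSet (goodSet P Q) := by
  have h1 : MeasurableSet {s | P s ≪ Q s} := Kernel.measurableSet_absolutelyContinuous P Q
  have hmeas : Measurable fun s => ∫⁻ t, ‖kllr P Q s t‖ₑ ∂P s := by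
    refine Measurable.lintegral_kernel_prod_right (κ := P) (f := fun s t => ‖kllr P Q s t‖ₑ) ?_
    exact (measurable_kllr P Q).enorm
  have h2 : MeasurableSet {s | Integrable (kllr P Q s) (P s)} := by
    have heq : {s | Integrable (kllr P Q s) (P s)}
        = {s | (∫⁻ t, ‖kllr P Q s t‖ₑ ∂P s) < ⊤} := by
      ext s
      simp only [Set.mem_setOf_eq]
      constructor
      · intro hs; exact hs.2
      · intro hs; exact ⟨(measurable_kllr_right P Q s).aestronglyMeasurable, hs⟩
    rw [heq]
    exact hmeas (measurableSet_Iio (a := (⊤ : ℝ≥0∞)))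
  exact h1.inter h2

lemma measurable_klK [MeasurableSpace.CountablyGenerated T] (P Q : Kernel S T) [IsSFiniteKernel P] :
    Measurable fun s => ∫ t, kllr P Q s t ∂P s :=
  ((measurable_kllr P Q).stronglyMeasurable.integral_kernel_prod_right).measurable

lemma KLdiv_kernel_eq [MeasurableSpace.CountablyGenerated T] (P Q : Kernel S T) [IsFiniteKernel P] [IsFiniteKernel Q] (s : S) :
    KLdiv (P s) (Q s) = if s ∈ goodSet P Q
      then ENNReal.ofReal (∫ t, kllr P Q s t ∂P s) else ⊤ := by
  by_cases hac : P s ≪ Q s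
  · have heq := kllr_ae_eq P Q hac
    have hiff : Integrable (kllr P Q s) (P s) ↔ Integrable (llr (P s) (Q s)) (P s) :=
      integrable_congr heq
    by_cases hi : Integrable (llr (P s) (Q s)) (P s)
    · rw [KLdiv, if_pos ⟨hac, hi⟩, if_pos (show s ∈ goodSet P Q from ⟨hac, hiff.2 hi⟩)]
      rw [integral_congr_ae heq]
    · rw [KLdiv, if_neg (by tauto), if_neg (fun hs => hi (hiff.1 hs.2))]
  · rw [KLdiv, if_neg (by tauto), if_neg (fun hs => hac hs.1)]

lemma measurable_KLdiv_kernel [MeasurableSpace.CountablyGenerated T] (P Q : Kernel S T) [IsFiniteKernel P] [IsFiniteKernel Q] :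
    Measurable fun s => KLdiv (P s) (Q s) := by
  simp only [KLdiv_kernel_eq P Q]
  exact Measurable.ite (measurableSet_goodSet P Q)
    (measurable_klK P Q).ennreal_ofReal measurable_const

lemma isProbabilityMeasure_bind (m : Measure S) [IsProbabilityMeasure m] (κ : Kernel S T)
    [IsMarkovKernel κ] : IsProbabilityMeasure (m.bind ⇑κ) := by
  constructor
  rw [Measure.bind_apply MeasurableSet.univ κ.measurable.aemeasurable]
  simp [measure_univ]

lemma integral_bind_nonneg (m : Measure S) [IsProbabilityMeasure m] (κ : Kernel S T)
    [IsMarkovKernel κ] {f : T → ℝ} (hf : Measurable f) {c : ℝ}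
    (h0 : ∀ t, 0 ≤ f t) (hc : ∀ t, f t ≤ c) :
    ∫ t, f t ∂(m.bind ⇑κ) = ∫ s, (∫ t, f t ∂κ s) ∂m := by
  have hΦm : Measurable fun s => ∫⁻ t, ENNReal.ofReal (f t) ∂κ s := by
    refine Measurable.lintegral_kernel_prod_right (κ := κ)
      (f := fun _ t => ENNReal.ofReal (f t)) ?_
    exact hf.ennreal_ofReal.comp measurable_snd
  have hΦub : ∀ s, (∫⁻ t, ENNReal.ofReal (f t) ∂κ s) ≤ ENNReal.ofReal c := fun s => by
    calc ∫⁻ t, ENNReal.ofReal (f t) ∂κ s ≤ ∫⁻ _, ENNReal.ofReal c ∂κ s :=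
          lintegral_mono fun t => ENNReal.ofReal_le_ofReal (hc t)
      _ = ENNReal.ofReal c := by simp [measure_univ]
  rw [integral_eq_lintegral_of_nonneg_ae (Filter.Eventually.of_forall h0)
    hf.aestronglyMeasurable,
    Measure.lintegral_bind κ.measurable.aemeasurable hf.ennreal_ofReal.aemeasurable,
    ← integral_toReal hΦm.aemeasurable
      (Filter.Eventually.of_forall fun s => lt_of_le_of_lt (hΦub s) ENNReal.ofReal_lt_top)]
  refine integral_congr_ae (Filter.Eventually.of_forall fun s => ?_)
  exact (integral_eq_lintegral_of_nonneg_ae (Filter.Eventually.of_forall h0)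
    hf.aestronglyMeasurable).symm

lemma integral_kernel_bdd_meas (κ : Kernel S T) [IsSFiniteKernel κ] {f : T → ℝ}
    (hf : Measurable f) : Measurable fun s => ∫ t, f t ∂κ s := by
  have : Measurable (Function.uncurry fun (_ : S) (t : T) => f t) :=
    hf.comp measurable_snd
  exact (this.stronglyMeasurable.integral_kernel_prod_right (κ := κ)).measurable

lemma integral_kernel_bdd_bound (κ : Kernel S T) [IsMarkovKernel κ] {f : T → ℝ} {c : ℝ}
    (hfc : ∀ t, |f t| ≤ c) (s : S) : |∫ t, f t ∂κ s| ≤ c := by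
  have h := norm_integral_le_of_norm_le_const (μ := κ s) (f := f) (C := c)
    (Filter.Eventually.of_forall fun t => by simpa [Real.norm_eq_abs] using hfc t)
  simpa [Real.norm_eq_abs, measure_univ] using h

lemma integral_bind_bdd (m : Measure S) [IsProbabilityMeasure m] (κ : Kernel S T)
    [IsMarkovKernel κ] {f : T → ℝ} (hf : Measurable f) {c : ℝ} (hfc : ∀ t, |f t| ≤ c) :
    ∫ t, f t ∂(m.bind ⇑κ) = ∫ s, (∫ t, f t ∂κ s) ∂m := by
  haveI hPb : IsProbabilityMeasure (m.bind ⇑κ) := isProbabilityMeasure_bind m κ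
  have h1 : ∫ t, (f t + c) ∂(m.bind ⇑κ) = ∫ s, (∫ t, (f t + c) ∂κ s) ∂m :=
    integral_bind_nonneg m κ (hf.add_const c)
      (fun t => by have := (abs_le.1 (hfc t)).1; linarith)
      (c := c + c) (fun t => by have := (abs_le.1 (hfc t)).2; linarith)
  have hf_int : ∀ (ν : Measure T), IsProbabilityMeasure ν → Integrable f ν := fun ν hν =>
    integrable_of_bddm hf hfc
  have h2 : ∫ t, (f t + c) ∂(m.bind ⇑κ) = ∫ t, f t ∂(m.bind ⇑κ) + c := by
    rw [integral_add (hf_int _ hPb) (integrable_const c)]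
    simp [measure_univ]
  have h3 : ∀ s, ∫ t, (f t + c) ∂κ s = ∫ t, f t ∂κ s + c := fun s => by
    rw [integral_add (hf_int _ inferInstance) (integrable_const c)]
    simp [measure_univ]
  have h4 : ∫ s, (∫ t, (f t + c) ∂κ s) ∂m = ∫ s, (∫ t, f t ∂κ s) ∂m + c := by
    rw [integral_congr_ae (Filter.Eventually.of_forall h3),
      integral_add (integrable_of_bddm (integral_kernel_bdd_meas κ hf)
        (integral_kernel_bdd_bound κ hfc)) (integrable_const c)]
    simp [measure_univ]
  rw [h2, h4] at h1
  linarith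

/-- **Joint convexity of KL divergence** in kernel/mixture form:
`KL(pr ∘ P ‖ pr ∘ Q) ≤ ∫ KL(P s ‖ Q s) dpr(s)`. -/
lemma KLdiv_bind_le [MeasurableSpace.CountablyGenerated T] (pr : Measure S) [IsProbabilityMeasure pr] (P Q : Kernel S T)
    [IsMarkovKernel P] [IsMarkovKernel Q] :
    KLdiv (pr.bind ⇑P) (pr.bind ⇑Q) ≤ ∫⁻ s, KLdiv (P s) (Q s) ∂pr := by
  classical
  by_cases hbad : pr (goodSet P Q)ᶜ = 0
  swap
  · -- the right-hand side is infinite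
    have h1 : (⊤ : ℝ≥0∞) ≤ ∫⁻ s, KLdiv (P s) (Q s) ∂pr := by
      have hpt : ∀ s, (goodSet P Q)ᶜ.indicator (fun _ => (⊤ : ℝ≥0∞)) s
          ≤ KLdiv (P s) (Q s) := fun s => by
        by_cases hs : s ∈ (goodSet P Q)ᶜ
        · rw [Set.indicator_of_mem hs, KLdiv_kernel_eq P Q, if_neg hs]
        · simp [Set.indicator_of_notMem hs]
      calc (⊤ : ℝ≥0∞) = ∫⁻ s, (goodSet P Q)ᶜ.indicator (fun _ => (⊤ : ℝ≥0∞)) s ∂pr := by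
            rw [lintegral_indicator (measurableSet_goodSet P Q).compl]
            simp only [lintegral_const, Measure.restrict_apply MeasurableSet.univ,
              Set.univ_inter]
            rw [ENNReal.top_mul hbad]
        _ ≤ ∫⁻ s, KLdiv (P s) (Q s) ∂pr := lintegral_mono hpt
    exact le_top.trans h1
  have hgood : ∀ᵐ s ∂pr, s ∈ goodSet P Q := by
    rw [ae_iff]
    exact hbad
  set K : S → ℝ := fun s => ∫ t, kllr P Q s t ∂P s with hKdef
  have hKm : Measurable K := measurable_klK P Q
  have hgood' : ∀ᵐ s ∂pr, P s ≪ Q s ∧ Integrable (llr (P s) (Q s)) (P s)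
      ∧ K s = ∫ t, llr (P s) (Q s) t ∂P s := by
    filter_upwards [hgood] with s hs
    obtain ⟨hac, hint⟩ := hs
    have heq := kllr_ae_eq P Q hac
    exact ⟨hac, (integrable_congr heq).1 hint, integral_congr_ae heq⟩
  have hK0 : ∀ᵐ s ∂pr, 0 ≤ K s := by
    filter_upwards [hgood'] with s hs
    rw [hs.2.2]
    exact integral_llr_nonneg (P s) (Q s) hs.1 hs.2.1
  have hRHS : ∫⁻ s, KLdiv (P s) (Q s) ∂pr = ∫⁻ s, ENNReal.ofReal (K s) ∂pr :=
    lintegral_congr_ae (hgood.mono fun s hs => by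
      show KLdiv (P s) (Q s) = ENNReal.ofReal (K s)
      rw [KLdiv_kernel_eq P Q, if_pos hs])
  rw [hRHS]
  by_cases htop : ∫⁻ s, ENNReal.ofReal (K s) ∂pr = ⊤
  · rw [htop]; exact le_top
  have hKint : Integrable K pr := by
    refine ⟨hKm.aestronglyMeasurable, ?_⟩
    rw [hasFiniteIntegral_iff_ofReal hK0]
    exact lt_top_iff_ne_top.2 htop
  set Pb := pr.bind ⇑P with hPbdef
  set Qb := pr.bind ⇑Q with hQbdef
  haveI : IsProbabilityMeasure Pb := isProbabilityMeasure_bind pr P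
  haveI : IsProbabilityMeasure Qb := isProbabilityMeasure_bind pr Q
  have hac : Pb ≪ Qb := by
    refine Measure.AbsolutelyContinuous.mk fun E hE hE0 => ?_
    rw [hQbdef, Measure.bind_apply hE Q.measurable.aemeasurable] at hE0
    rw [hPbdef, Measure.bind_apply hE P.measurable.aemeasurable]
    have h0 : ∀ᵐ s ∂pr, Q s E = 0 := by
      have := (lintegral_eq_zero_iff (Q.measurable_coe hE)).1 hE0
      filter_upwards [this] with s hs using hs
    rw [lintegral_eq_zero_iff (P.measurable_coe hE)]
    filter_upwards [h0, hgood'] with s h1 h2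
    exact h2.1 h1
  -- master inequality for bounded measurable test functions
  have master : ∀ (g : T → ℝ) (c : ℝ), Measurable g → (∀ t, |g t| ≤ c) →
      ∫ t, g t ∂Pb ≤ ∫ s, K s ∂pr + Real.log (∫ t, Real.exp (g t) ∂Qb) := by
    intro g c hg hgc
    have hexp_m : Measurable fun t => Real.exp (g t) := hg.exp
    have hexp_bd : ∀ t, |Real.exp (g t)| ≤ Real.exp c := fun t => by
      rw [abs_of_pos (Real.exp_pos _)]
      exact Real.exp_le_exp.2 ((le_abs_self _).trans (hgc t))
    have hφm : Measurable fun s => ∫ t, g t ∂P s := integral_kernel_bdd_meas P hg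
    have hφb : ∀ s, |∫ t, g t ∂P s| ≤ c := integral_kernel_bdd_bound P hgc
    have hFm : Measurable fun s => ∫ t, Real.exp (g t) ∂Q s :=
      integral_kernel_bdd_meas Q hexp_m
    have hFlb : ∀ s, Real.exp (-c) ≤ ∫ t, Real.exp (g t) ∂Q s := fun s => by
      have h := integral_mono (μ := Q s) (integrable_const (Real.exp (-c)))
        (integrable_of_bddm hexp_m hexp_bd)
        (fun t => Real.exp_le_exp.2 (neg_le_of_abs_le (hgc t)))
      simpa [integral_const, measure_univ] using h
    have hFub : ∀ s, (∫ t, Real.exp (g t) ∂Q s) ≤ Real.exp c := fun s =>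
      (le_abs_self _).trans (integral_kernel_bdd_bound Q hexp_bd s)
    have hF0 : ∀ s, 0 < ∫ t, Real.exp (g t) ∂Q s := fun s =>
      lt_of_lt_of_le (Real.exp_pos _) (hFlb s)
    have h1 : ∫ t, g t ∂Pb = ∫ s, ∫ t, g t ∂P s ∂pr := integral_bind_bdd pr P hg hgc
    have h2 : ∀ᵐ s ∂pr, ∫ t, g t ∂P s ≤ K s + Real.log (∫ t, Real.exp (g t) ∂Q s) := by
      filter_upwards [hgood'] with s hs
      have := gibbs (P s) (Q s) hs.1 hs.2.1 hg hgc
      rw [← hs.2.2] at this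
      exact this
    have hφint : Integrable (fun s => ∫ t, g t ∂P s) pr := integrable_of_bddm hφm hφb
    have hlogF_bd : ∀ s, |Real.log (∫ t, Real.exp (g t) ∂Q s)| ≤ |c| := fun s => by
      rw [abs_le]
      constructor
      · calc -|c| ≤ -c := neg_le_neg (le_abs_self c)
          _ = Real.log (Real.exp (-c)) := (Real.log_exp _).symm
          _ ≤ _ := Real.log_le_log (Real.exp_pos _) (hFlb s)
      · calc Real.log (∫ t, Real.exp (g t) ∂Q s) ≤ Real.log (Real.exp c) :=
              Real.log_le_log (hF0 s) (hFub s)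
          _ = c := Real.log_exp _
          _ ≤ |c| := le_abs_self c
    have hlogF_int : Integrable (fun s => Real.log (∫ t, Real.exp (g t) ∂Q s)) pr :=
      integrable_of_bddm hFm.log hlogF_bd
    have hFint : Integrable (fun s => ∫ t, Real.exp (g t) ∂Q s) pr :=
      integrable_of_bddm hFm (c := Real.exp c)
        (fun s => by rw [abs_of_pos (hF0 s)]; exact hFub s)
    calc ∫ t, g t ∂Pb = ∫ s, ∫ t, g t ∂P s ∂pr := h1
      _ ≤ ∫ s, (K s + Real.log (∫ t, Real.exp (g t) ∂Q s)) ∂pr :=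
          integral_mono_ae hφint (hKint.add hlogF_int) h2
      _ = ∫ s, K s ∂pr + ∫ s, Real.log (∫ t, Real.exp (g t) ∂Q s) ∂pr :=
          integral_add hKint hlogF_int
      _ ≤ ∫ s, K s ∂pr + Real.log (∫ s, ∫ t, Real.exp (g t) ∂Q s ∂pr) := by
          refine add_le_add_right ?_ _
          exact integral_log_le pr hFint hlogF_int (Real.exp_pos (-c)) hFlb
      _ = ∫ s, K s ∂pr + Real.log (∫ t, Real.exp (g t) ∂Qb) := by
          rw [integral_bind_nonneg pr Q hexp_m (fun t => (Real.exp_pos _).le)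
            (c := Real.exp c) (fun t => (le_abs_self _).trans (hexp_bd t))]
  set L : T → ℝ := llr Pb Qb with hLdef
  have hLm : Measurable L := measurable_llr _ _
  set r : T → ℝ≥0∞ := Pb.rnDeriv Qb with hrdef
  have hrm : Measurable r := Measure.measurable_rnDeriv _ _
  have hLlog : ∀ t, L t = Real.log (r t).toReal := fun t => rfl
  -- negative part of L is integrable
  have hLn_m : Measurable fun x => max (-L x) 0 := hLm.neg.max measurable_const
  have hLn_int : Integrable (fun x => max (-L x) 0) Pb := by
    refine ⟨hLn_m.aestronglyMeasurable, ?_⟩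
    have hnn : (0 : T → ℝ) ≤ᵐ[Pb] fun x => max (-L x) 0 :=
      Filter.Eventually.of_forall fun x => le_max_right _ _
    rw [hasFiniteIntegral_iff_ofReal hnn]
    have heq : ∫⁻ x, ENNReal.ofReal (max (-L x) 0) ∂Pb
        = ∫⁻ x, r x * ENNReal.ofReal (max (-L x) 0) ∂Qb :=
      (MeasureTheory.lintegral_rnDeriv_mul hac hLn_m.ennreal_ofReal.aemeasurable).symm
    rw [heq]
    have hb : ∀ᵐ x ∂Qb, r x * ENNReal.ofReal (max (-L x) 0) ≤ 1 := by
      filter_upwards [Measure.rnDeriv_lt_top Pb Qb] with x hx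
      rw [← hrdef] at hx
      by_cases h0 : r x = 0
      · rw [h0, zero_mul]; exact zero_le_one
      · have hu : 0 < (r x).toReal := ENNReal.toReal_pos h0 hx.ne
        rw [← ENNReal.ofReal_toReal hx.ne, ← ENNReal.ofReal_mul ENNReal.toReal_nonneg,
          show (1 : ℝ≥0∞) = ENNReal.ofReal 1 by simp]
        apply ENNReal.ofReal_le_ofReal
        rw [hLlog x]
        set u := (r x).toReal with hudef
        rcases le_or_gt (Real.log u) 0 with h | h
        · rw [max_eq_left (neg_nonneg.2 h)]
          have hiu : 0 < u⁻¹ := inv_pos.2 hu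
          have hlog := Real.log_le_sub_one_of_pos hiu
          rw [Real.log_inv] at hlog
          have := mul_le_mul_of_nonneg_left hlog hu.le
          calc u * -Real.log u ≤ u * (u⁻¹ - 1) := this
            _ = 1 - u := by field_simp
            _ ≤ 1 := by linarith
        · rw [max_eq_right (neg_nonpos.2 h.le), mul_zero]
          exact zero_le_one
    calc ∫⁻ x, r x * ENNReal.ofReal (max (-L x) 0) ∂Qb ≤ ∫⁻ _, 1 ∂Qb := lintegral_mono_ae hb
      _ = 1 := by simp [measure_univ]
      _ < ⊤ := ENNReal.one_lt_top
  -- per-n truncated bound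
  have hclamp_m : ∀ n : ℕ, Measurable fun x => max (min (L x) n) (-(n : ℝ)) := fun n =>
    (hLm.min measurable_const).max measurable_const
  have hclamp_bd : ∀ n : ℕ, ∀ x, |max (min (L x) n) (-(n : ℝ))| ≤ (n : ℝ) := fun n x => by
    rw [abs_le]
    refine ⟨le_max_right _ _, max_le (min_le_right _ _)
      ((neg_nonpos.2 (Nat.cast_nonneg _)).trans (Nat.cast_nonneg _))⟩
  have hclamp_int : ∀ n : ℕ, Integrable (fun x => max (min (L x) n) (-(n : ℝ))) Pb := fun n =>
    integrable_of_bddm (hclamp_m n) (hclamp_bd n)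
  have hstep : ∀ n : ℕ, ∫ x, max (min (L x) n) (-(n : ℝ)) ∂Pb
      ≤ ∫ s, K s ∂pr + Real.log (1 + 2 * Real.exp (-(n : ℝ))) := by
    intro n
    set gn : T → ℝ := fun x => if r x = 0 then -(n : ℝ) else max (min (L x) n) (-(n : ℝ))
      with hgndef
    have hgnm : Measurable gn :=
      Measurable.ite (hrm (measurableSet_singleton 0)) measurable_const (hclamp_m n)
    have hgnb : ∀ x, |gn x| ≤ (n : ℝ) := fun x => by
      simp only [hgndef]
      by_cases h0 : r x = 0
      · rw [if_pos h0, abs_neg, abs_of_nonneg (Nat.cast_nonneg n : (0 : ℝ) ≤ n)]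
      · rw [if_neg h0]; exact hclamp_bd n x
    have hgn_ae : gn =ᵐ[Pb] fun x => max (min (L x) n) (-(n : ℝ)) := by
      filter_upwards [Measure.rnDeriv_pos hac] with x hx
      rw [← hrdef] at hx
      simp only [hgndef]
      rw [if_neg hx.ne']
    have hexp_le : ∫ t, Real.exp (gn t) ∂Qb ≤ 1 + 2 * Real.exp (-(n : ℝ)) := by
      have hb : ∀ᵐ x ∂Qb, Real.exp (gn x) ≤ (r x).toReal + 2 * Real.exp (-(n : ℝ)) := by
        filter_upwards [Measure.rnDeriv_lt_top Pb Qb] with x hx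
        rw [← hrdef] at hx
        by_cases h0 : r x = 0
        · simp only [hgndef]
          rw [if_pos h0]
          have : (r x).toReal = 0 := by rw [h0]; simp
          rw [this]
          nlinarith [Real.exp_pos (-(n : ℝ))]
        · have hu : 0 < (r x).toReal := ENNReal.toReal_pos h0 hx.ne
          simp only [hgndef]
          rw [if_neg h0]
          have h1 : max (min (L x) n) (-(n : ℝ)) ≤ max (L x) (-(n : ℝ)) :=
            max_le_max (min_le_left _ _) le_rfl
          calc Real.exp (max (min (L x) n) (-(n : ℝ)))
              ≤ Real.exp (max (L x) (-(n : ℝ))) := Real.exp_le_exp.2 h1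
            _ ≤ Real.exp (L x) + Real.exp (-(n : ℝ)) := by
                rcases max_cases (L x) (-(n : ℝ)) with ⟨heq, _⟩ | ⟨heq, _⟩ <;> rw [heq] <;>
                  nlinarith [Real.exp_pos (L x), Real.exp_pos (-(n : ℝ))]
            _ = (r x).toReal + Real.exp (-(n : ℝ)) := by
                rw [hLlog x, Real.exp_log hu]
            _ ≤ (r x).toReal + 2 * Real.exp (-(n : ℝ)) := by
                nlinarith [Real.exp_pos (-(n : ℝ))]
      have hrint : Integrable (fun x => (r x).toReal) Qb := Measure.integrable_toReal_rnDeriv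
      have h2 : ∫ t, Real.exp (gn t) ∂Qb
          ≤ ∫ x, ((r x).toReal + 2 * Real.exp (-(n : ℝ))) ∂Qb := by
        refine integral_mono_ae (integrable_of_bddm hgnm.exp (c := Real.exp n)
          (fun x => by
            rw [abs_of_pos (Real.exp_pos _)]
            exact Real.exp_le_exp.2 ((le_abs_self _).trans (hgnb x))))
          (hrint.add (integrable_const _)) hb
      rw [integral_add hrint (integrable_const _), Measure.integral_toReal_rnDeriv hac] at h2
      simpa [measure_univ] using h2
    have hexp_pos : 0 < ∫ t, Real.exp (gn t) ∂Qb := by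
      have h := integral_mono (μ := Qb) (integrable_const (Real.exp (-(n : ℝ))))
        (integrable_of_bddm hgnm.exp (c := Real.exp n)
          (fun x => by
            rw [abs_of_pos (Real.exp_pos _)]
            exact Real.exp_le_exp.2 ((le_abs_self _).trans (hgnb x))))
        (fun t => Real.exp_le_exp.2 (neg_le_of_abs_le (hgnb t)))
      have h' : Real.exp (-(n : ℝ)) ≤ ∫ t, Real.exp (gn t) ∂Qb := by
        simpa [integral_const, measure_univ] using h
      exact lt_of_lt_of_le (Real.exp_pos _) h'
    have hmaster := master gn n hgnm hgnb
    rw [integral_congr_ae hgn_ae] at hmaster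
    refine hmaster.trans (add_le_add_right ?_ _)
    exact Real.log_le_log hexp_pos hexp_le
  -- positive part of L is integrable
  have hLp_m : Measurable fun x => max (L x) 0 := hLm.max measurable_const
  have hLp_int : Integrable (fun x => max (L x) 0) Pb := by
    set M : ℝ := ∫ s, K s ∂pr + Real.log 3 + ∫ x, max (-L x) 0 ∂Pb with hMdef
    have hn : ∀ n : ℕ, ∫⁻ x, ENNReal.ofReal (min (max (L x) 0) n) ∂Pb ≤ ENNReal.ofReal M := by
      intro n
      have hint : Integrable (fun x => min (max (L x) 0) (n : ℝ)) Pb :=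
        integrable_of_bddm (hLp_m.min measurable_const)
          (c := (n : ℝ)) (fun x => by
            rw [abs_of_nonneg (le_min (le_max_right _ _) (Nat.cast_nonneg n))]
            exact min_le_right _ _)
      rw [← ofReal_integral_eq_lintegral_ofReal hint
        (Filter.Eventually.of_forall fun x => le_min (le_max_right _ _) (Nat.cast_nonneg n))]
      apply ENNReal.ofReal_le_ofReal
      have hptw : ∀ x, min (max (L x) 0) (n : ℝ)
          ≤ max (min (L x) n) (-(n : ℝ)) + max (-L x) 0 := fun x => by
        rcases le_total 0 (L x) with h | h
        · rw [max_eq_left h, max_eq_right (neg_nonpos.2 h)]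
          have : max (min (L x) n) (-(n : ℝ)) = min (L x) n :=
            max_eq_left (le_min (le_trans (neg_nonpos.2 (Nat.cast_nonneg _)) h)
              ((neg_nonpos.2 (Nat.cast_nonneg _)).trans (Nat.cast_nonneg _)))
          rw [this]; simp
        · rw [max_eq_right h, max_eq_left (neg_nonneg.2 h)]
          have h1 : min (L x) (n : ℝ) = L x := min_eq_left (h.trans (Nat.cast_nonneg n))
          rw [h1]
          have h2 : -(n : ℝ) ≤ max (L x) (-(n : ℝ)) := le_max_right _ _
          have : min (0 : ℝ) (n : ℝ) = 0 := min_eq_left (Nat.cast_nonneg n)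
          rw [this]
          rcases max_cases (L x) (-(n : ℝ)) with ⟨heq, hc⟩ | ⟨heq, hc⟩ <;> rw [heq] <;> linarith
      calc ∫ x, min (max (L x) 0) (n : ℝ) ∂Pb
          ≤ ∫ x, (max (min (L x) n) (-(n : ℝ)) + max (-L x) 0) ∂Pb :=
            integral_mono hint ((hclamp_int n).add hLn_int) hptw
        _ = ∫ x, max (min (L x) n) (-(n : ℝ)) ∂Pb + ∫ x, max (-L x) 0 ∂Pb :=
            integral_add (hclamp_int n) hLn_int
        _ ≤ (∫ s, K s ∂pr + Real.log (1 + 2 * Real.exp (-(n : ℝ)))) + ∫ x, max (-L x) 0 ∂Pb :=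
            add_le_add_left (hstep n) _
        _ ≤ M := by
            rw [hMdef]
            have h3 : Real.log (1 + 2 * Real.exp (-(n : ℝ))) ≤ Real.log 3 := by
              apply Real.log_le_log (by nlinarith [Real.exp_pos (-(n : ℝ))])
              have : Real.exp (-(n : ℝ)) ≤ 1 :=
                Real.exp_le_one_iff.2 (neg_nonpos.2 (Nat.cast_nonneg _))
              linarith
            linarith
    have hsup : ∀ x, ⨆ n : ℕ, ENNReal.ofReal (min (max (L x) 0) (n : ℝ))
        = ENNReal.ofReal (max (L x) 0) := fun x => by
      apply le_antisymm (iSup_le fun n => ENNReal.ofReal_le_ofReal (min_le_left _ _))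
      obtain ⟨n, hnx⟩ := exists_nat_ge (max (L x) 0)
      refine le_iSup_of_le n (le_of_eq ?_)
      rw [min_eq_left hnx]
    have hlim : ∫⁻ x, ENNReal.ofReal (max (L x) 0) ∂Pb ≤ ENNReal.ofReal M := by
      calc ∫⁻ x, ENNReal.ofReal (max (L x) 0) ∂Pb
          = ∫⁻ x, ⨆ n : ℕ, ENNReal.ofReal (min (max (L x) 0) (n : ℝ)) ∂Pb :=
            lintegral_congr fun x => (hsup x).symm
        _ = ⨆ n : ℕ, ∫⁻ x, ENNReal.ofReal (min (max (L x) 0) (n : ℝ)) ∂Pb := by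
            refine lintegral_iSup (fun n => (hLp_m.min measurable_const).ennreal_ofReal) ?_
            intro n m hnm x
            exact ENNReal.ofReal_le_ofReal (min_le_min le_rfl (Nat.cast_le.2 hnm))
        _ ≤ ENNReal.ofReal M := iSup_le hn
    refine ⟨hLp_m.aestronglyMeasurable, ?_⟩
    have hnn : (0 : T → ℝ) ≤ᵐ[Pb] fun x => max (L x) 0 :=
      Filter.Eventually.of_forall fun x => le_max_right _ _
    rw [hasFiniteIntegral_iff_ofReal hnn]
    exact lt_of_le_of_lt hlim ENNReal.ofReal_lt_top
  have hLint : Integrable L Pb := by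
    have hLeq : L = fun x => max (L x) 0 - max (-L x) 0 := funext fun x => by
      rcases le_total 0 (L x) with h | h
      · rw [max_eq_left h, max_eq_right (neg_nonpos.2 h)]; ring
      · rw [max_eq_right h, max_eq_left (neg_nonneg.2 h)]; ring
    rw [hLeq]
    exact hLp_int.sub hLn_int
  -- take the limit in n
  have hfinal : ∫ x, L x ∂Pb ≤ ∫ s, K s ∂pr := by
    have htendA : Tendsto (fun n : ℕ => ∫ x, max (min (L x) n) (-(n : ℝ)) ∂Pb) atTop
        (nhds (∫ x, L x ∂Pb)) := by
      refine tendsto_integral_of_dominated_convergence (fun x => |L x|)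
        (fun n => (hclamp_m n).aestronglyMeasurable) hLint.abs
        (fun n => Filter.Eventually.of_forall fun x => ?_)
        (Filter.Eventually.of_forall fun x => ?_)
      · simp only [Real.norm_eq_abs]
        rw [abs_le]
        rcases le_total 0 (L x) with h | h
        · have h1 : (0 : ℝ) ≤ min (L x) n := le_min h (Nat.cast_nonneg n)
          have h2 : max (min (L x) n) (-(n : ℝ)) = min (L x) n :=
            max_eq_left (h1.trans' (neg_nonpos.2 (Nat.cast_nonneg _)))
          rw [h2, abs_of_nonneg h]
          exact ⟨le_trans (neg_nonpos.2 h) h1, min_le_left _ _⟩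
        · have h1 : min (L x) (n : ℝ) = L x := min_eq_left (h.trans (Nat.cast_nonneg n))
          rw [h1, abs_of_nonpos h]
          constructor
          · rw [neg_neg]; exact le_max_left _ _
          · exact max_le (by linarith)
              (by linarith [(Nat.cast_nonneg n : (0 : ℝ) ≤ (n : ℝ))])
      · refine tendsto_atTop_of_eventually_const (i₀ := ⌈|L x|⌉₊) fun n hn => ?_
        have hxn : |L x| ≤ (n : ℝ) := (Nat.le_ceil _).trans (Nat.cast_le.2 hn)
        rw [min_eq_left (le_trans (le_abs_self _) hxn),
          max_eq_left (le_trans (neg_le_neg hxn) (neg_abs_le _))]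
    have htendB : Tendsto (fun n : ℕ => ∫ s, K s ∂pr + Real.log (1 + 2 * Real.exp (-(n : ℝ))))
        atTop (nhds (∫ s, K s ∂pr)) := by
      have h1 : Tendsto (fun n : ℕ => Real.exp (-(n : ℝ))) atTop (nhds 0) :=
        Real.tendsto_exp_neg_atTop_nhds_zero.comp tendsto_natCast_atTop_atTop
      have h2 : Tendsto (fun n : ℕ => 1 + 2 * Real.exp (-(n : ℝ))) atTop (nhds 1) := by
        have := (h1.const_mul 2).const_add 1
        simpa using this
      have h3 : Tendsto (fun n : ℕ => Real.log (1 + 2 * Real.exp (-(n : ℝ)))) atTop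
          (nhds 0) := by
        have := (Real.continuousAt_log (by norm_num : (1 : ℝ) ≠ 0)).tendsto.comp h2
        simpa [Function.comp_def] using this
      have := h3.const_add (∫ s, K s ∂pr)
      simpa using this
    exact le_of_tendsto_of_tendsto' htendA htendB hstep
  rw [KLdiv, if_pos ⟨hac, hLint⟩]
  calc ENNReal.ofReal (∫ x, llr Pb Qb x ∂Pb) ≤ ENNReal.ofReal (∫ s, K s ∂pr) :=
        ENNReal.ofReal_le_ofReal hfinal
    _ = ∫⁻ s, ENNReal.ofReal (K s) ∂pr := ofReal_integral_eq_lintegral_ofReal hKint hK0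
    _ ≤ ∫⁻ s, ENNReal.ofReal (K s) ∂pr := le_rfl

end KernelKL

section CondDistribAux

variable {Ω : Type*} [MeasurableSpace Ω]

lemma compProd_condDistrib {β E : Type*} [MeasurableSpace β] [MeasurableSpace E]
    [StandardBorelSpace E] [Nonempty E] (μ : Measure Ω) [IsProbabilityMeasure μ]
    {X : Ω → β} {Y : Ω → E} (hX : Measurable X) (hY : Measurable Y) :
    (μ.map X) ⊗ₘ condDistrib Y X μ = μ.map (fun ω => (X ω, Y ω)) := by
  haveI : IsProbabilityMeasure (μ.map fun ω => (X ω, Y ω)) :=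
    Measure.isProbabilityMeasure_map (hX.prodMk hY).aemeasurable
  exact compProd_map_condDistrib hY.aemeasurable

lemma condDistrib_const_of_prod {β E : Type*} [MeasurableSpace β] [MeasurableSpace E]
    [StandardBorelSpace E] [Nonempty E] (μ : Measure Ω) [IsProbabilityMeasure μ]
    {X : Ω → β} {Y : Ω → E} (hX : Measurable X) (hY : Measurable Y) (ν : Measure E)
    [IsFiniteMeasure ν]
    (h : μ.map (fun ω => (X ω, Y ω)) = (μ.map X).prod ν) :
    ∀ᵐ x ∂μ.map X, condDistrib Y X μ x = ν := by
  have h2 := condDistrib_ae_eq_of_measure_eq_compProd_of_measurable (μ := μ) hX hY (κ := Kernel.const β ν)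
    (by rw [Measure.compProd_const]; exact h)
  filter_upwards [h2] with x hx
  rw [hx, Kernel.const_apply]

/-- Tower property: the conditional distribution given `f ∘ X` is obtained by composing the
conditional distribution given `X` with that of `X` given `f ∘ X`. -/
lemma condDistrib_comp_ae {S C T : Type*} [MeasurableSpace S] [StandardBorelSpace S]
    [Nonempty S] [MeasurableSpace C] [MeasurableSpace T] [StandardBorelSpace T] [Nonempty T]
    (μ : Measure Ω) [IsProbabilityMeasure μ] {X : Ω → S} {f : S → C} {Y : Ω → T}
    (hX : Measurable X) (hf : Measurable f) (hY : Measurable Y)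
    (hD : MeasurableSet {p : C × S | f p.2 = p.1}) :
    ∀ᵐ c ∂μ.map (fun ω => f (X ω)), condDistrib Y (fun ω => f (X ω)) μ c
      = (condDistrib Y X μ ∘ₖ condDistrib X (fun ω => f (X ω)) μ) c := by
  have hF : Measurable fun ω => f (X ω) := hf.comp hX
  haveI : IsProbabilityMeasure (μ.map fun ω => f (X ω)) :=
    Measure.isProbabilityMeasure_map hF.aemeasurable
  haveI : IsProbabilityMeasure (μ.map X) := Measure.isProbabilityMeasure_map hX.aemeasurable
  set κ' := condDistrib X (fun ω => f (X ω)) μ with hκ'def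
  set ρY := condDistrib Y X μ with hρYdef
  have h1 : (μ.map fun ω => f (X ω)) ⊗ₘ κ' = μ.map (fun ω => (f (X ω), X ω)) :=
    compProd_condDistrib μ hF hX
  have h2 : (μ.map X) ⊗ₘ ρY = μ.map (fun ω => (X ω, Y ω)) := compProd_condDistrib μ hX hY
  -- concentration of κ' on the fiber
  have hDc : ((μ.map fun ω => f (X ω)) ⊗ₘ κ') {p : C × S | f p.2 = p.1}ᶜ = 0 := by
    rw [h1, Measure.map_apply (hF.prodMk hX) hD.compl]
    convert measure_empty (μ := μ)
    ext ω
    simp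
  have hconc : ∀ᵐ c ∂μ.map (fun ω => f (X ω)), κ' c {s | ¬ f s = c} = 0 := by
    rw [Measure.compProd_apply hD.compl] at hDc
    have h3 := (lintegral_eq_zero_iff
      (Kernel.measurable_kernel_prodMk_left (κ := κ') hD.compl)).1 hDc
    filter_upwards [h3] with c hc
    have : (Prod.mk c ⁻¹' {p : C × S | f p.2 = p.1}ᶜ) = {s | ¬ f s = c} := by
      ext s; simp [eq_comm]
    rw [← this]
    exact hc
  refine (condDistrib_ae_eq_of_measure_eq_compProd_of_measurable hF hY (κ := ρY ∘ₖ κ') ?_).mono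
    fun c hc => hc
  -- measure identity on rectangles
  haveI : IsProbabilityMeasure (μ.map fun ω => (f (X ω), Y ω)) :=
    Measure.isProbabilityMeasure_map (hF.prodMk hY).aemeasurable
  refine ext_of_generate_finite _ generateFrom_prod.symm
    isPiSystem_prod ?_ ?_
  swap
  · rw [Measure.map_apply (hF.prodMk hY) MeasurableSet.univ]
    simp [measure_univ]
  rintro _ ⟨E, hE, F', hF', rfl⟩
  simp only [Set.mem_setOf_eq] at hE hF'
  -- LHS
  have hLHS : (μ.map fun ω => (f (X ω), Y ω)) (E ×ˢ F')
      = ((μ.map X) ⊗ₘ ρY) ((f ⁻¹' E) ×ˢ F') := by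
    rw [h2, Measure.map_apply (hF.prodMk hY) (hE.prod hF'),
      Measure.map_apply (hX.prodMk hY) ((hf hE).prod hF')]
    rfl
  rw [hLHS, Measure.compProd_apply_prod (hf hE) hF',
    Measure.compProd_apply_prod hE hF']
  -- both sides as integrals over μ.map (f ∘ X) and κ'
  have hsnd : μ.map X = ((μ.map fun ω => f (X ω)) ⊗ₘ κ').snd := by
    rw [h1, Measure.snd_map_prodMk hF]
  set G : S → ℝ≥0∞ := (f ⁻¹' E).indicator (fun s => ρY s F') with hGdef
  have hGm : Measurable G := (ρY.measurable_coe hF').indicator (hf hE)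
  have hstep1 : ∫⁻ s in f ⁻¹' E, ρY s F' ∂(μ.map X) = ∫⁻ s, G s ∂(μ.map X) := by
    rw [hGdef, lintegral_indicator (hf hE)]
  have hstep2 : ∫⁻ s, G s ∂(μ.map X)
      = ∫⁻ c, ∫⁻ s, G s ∂κ' c ∂(μ.map fun ω => f (X ω)) := by
    have hcp : ∫⁻ p : C × S, G p.2 ∂((μ.map fun ω => f (X ω)) ⊗ₘ κ')
        = ∫⁻ c, ∫⁻ s, G s ∂κ' c ∂(μ.map fun ω => f (X ω)) :=
      Measure.lintegral_compProd (hGm.comp measurable_snd)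
    rw [hsnd, Measure.snd, lintegral_map hGm measurable_snd]
    exact hcp
  have hstep3 : ∫⁻ c, ∫⁻ s, G s ∂κ' c ∂(μ.map fun ω => f (X ω))
      = ∫⁻ c in E, (ρY ∘ₖ κ') c F' ∂(μ.map fun ω => f (X ω)) := by
    rw [← lintegral_indicator hE]
    refine lintegral_congr_ae ?_
    filter_upwards [hconc] with c hc
    have hae : ∀ᵐ s ∂κ' c, G s = (if c ∈ E then ρY s F' else 0) := by
      rw [ae_iff]
      refine measure_mono_null ?_ hc
      intro s hs
      simp only [Set.mem_setOf_eq] at hs ⊢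
      intro hfs
      apply hs
      rw [hGdef]
      by_cases hcE : c ∈ E
      · rw [if_pos hcE, Set.indicator_of_mem (by simp [Set.mem_preimage, hfs, hcE])]
      · rw [if_neg hcE, Set.indicator_of_notMem (by simp [Set.mem_preimage, hfs, hcE])]
    rw [lintegral_congr_ae hae]
    by_cases hcE : c ∈ E
    · simp only [if_pos hcE, Set.indicator_of_mem hcE]
      rw [Kernel.comp_apply' _ _ _ hF']
    · simp only [if_neg hcE, Set.indicator_of_notMem hcE, lintegral_zero]
  rw [hstep1, hstep2, hstep3]

lemma bind_prod_const {S X Y : Type*} [MeasurableSpace S] [MeasurableSpace X]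
    [MeasurableSpace Y] (m : Measure S) [IsProbabilityMeasure m] (κ : Kernel S X)
    [IsMarkovKernel κ] (β : Measure Y) [IsProbabilityMeasure β] :
    m.bind ⇑(κ ×ₖ Kernel.const S β) = (m.bind ⇑κ).prod β := by
  haveI h1 : IsProbabilityMeasure (m.bind ⇑κ) := StmtAux.isProbabilityMeasure_bind m κ
  haveI h2 : IsProbabilityMeasure (m.bind ⇑(κ ×ₖ Kernel.const S β)) :=
    StmtAux.isProbabilityMeasure_bind m _
  refine ext_of_generate_finite _ generateFrom_prod.symm
    isPiSystem_prod ?_ (by simp [measure_univ])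
  rintro _ ⟨E, hE, F, hF, rfl⟩
  simp only [Set.mem_setOf_eq] at hE hF
  rw [Measure.bind_apply (hE.prod hF) (κ ×ₖ Kernel.const S β).measurable.aemeasurable,
    Measure.prod_prod, Measure.bind_apply hE κ.measurable.aemeasurable]
  have hpt : ∀ s, (κ ×ₖ Kernel.const S β) s (E ×ˢ F) = κ s E * β F := fun s => by
    rw [Kernel.prod_apply, Measure.prod_prod, Kernel.const_apply]
  simp_rw [hpt]
  rw [lintegral_mul_const _ (κ.measurable_coe hE)]

end CondDistribAux

lemma bern_eval {N : ℕ} (i : Fin N) :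
    (Measure.pi fun _ : Fin N => bern).map (fun u => u i) = bern := by
  ext s hs
  rw [Measure.map_apply (measurable_pi_apply i) hs]
  have hpre : ((fun u : Fin N → Bool => u i) ⁻¹' s)
      = Set.pi Set.univ (Function.update (fun _ => Set.univ) i s) := Set.eval_preimage
  rw [hpre, Measure.pi_pi]
  have hterm : ∀ j : Fin N, bern (Function.update (fun _ => (Set.univ : Set Bool)) i s j)
      = Function.update (fun _ : Fin N => (1 : ℝ≥0∞)) i (bern s) j := fun j => by
    rcases eq_or_ne j i with rfl | h
    · simp
    · rw [Function.update_of_ne h, Function.update_of_ne h]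
      exact measure_univ
  rw [Finset.prod_congr rfl fun j _ => hterm j,
    Finset.prod_update_of_mem (Finset.mem_univ i)]
  simp [measure_univ]

end StmtAux

/-- in the randomized subsample setting,
`I(W; U_i | Z̃_i, Z̃_{i+N}) ≤ I(W; U_i | S̃)` for every `i`. -/
theorem stmt11
    {𝒵 𝒲 : Type*}
    [MeasurableSpace 𝒵] [StandardBorelSpace 𝒵] [Nonempty 𝒵]
    [MeasurableSpace 𝒲] [StandardBorelSpace 𝒲] [Nonempty 𝒲]
    {Ω : Type*} [MeasurableSpace Ω] (μ : Measure Ω) [IsProbabilityMeasure μ]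
    (N : ℕ) (hN : 0 < N)
    (PZ : Measure 𝒵) [IsProbabilityMeasure PZ]
    (St : Ω → Fin (2 * N) → 𝒵) (U : Ω → Fin N → Bool) (W : Ω → 𝒲)
    (hSt : Measurable St) (hU : Measurable U) (hW : Measurable W)
    -- `S̃` is i.i.d. `P_Z`, `U` is i.i.d. Bernoulli(1/2), and they are independent
    (hlaw : μ.map (fun ω => (St ω, U ω)) =
      (Measure.pi fun _ : Fin (2 * N) => PZ).prod (Measure.pi fun _ : Fin N => bern))
    -- the hypothesis `W` is produced by a Markov kernel applied to the dataset `S`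
    (hkernel : ∃ κ : Kernel (Fin N → 𝒵) 𝒲, IsMarkovKernel κ ∧
      μ.map (fun ω => ((St ω, U ω), W ω)) =
        (μ.map fun ω => (St ω, U ω)) ⊗ₘ κ.comap (dataset N) measurable_dataset)
    (i : Fin N) :
    condMI μ W (fun ω => U ω i)
        (fun ω => (St ω (subIdx N i false), St ω (subIdx N i true))) ≤
      condMI μ W (fun ω => U ω i) St := by
  classical
  clear hkernel hN
  set a := subIdx N i false with ha
  set b := subIdx N i true with hb
  have hB : Measurable fun ω => U ω i := (measurable_pi_apply i).comp hU
  set f : (Fin (2 * N) → 𝒵) → 𝒵 × 𝒵 := fun s => (s a, s b) with hfdef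
  have hf : Measurable f := (measurable_pi_apply a).prodMk (measurable_pi_apply b)
  have hC : Measurable fun ω => f (St ω) := hf.comp hSt
  have hY : Measurable fun ω => (W ω, U ω i) := hW.prodMk hB
  haveI : IsProbabilityMeasure (μ.map St) := Measure.isProbabilityMeasure_map hSt.aemeasurable
  haveI : IsProbabilityMeasure (μ.map fun ω => f (St ω)) :=
    Measure.isProbabilityMeasure_map hC.aemeasurable
  -- the law of St
  have hmapSt : μ.map St = Measure.pi fun _ : Fin (2 * N) => PZ := by
    have hcomp : St = Prod.fst ∘ (fun ω => (St ω, U ω)) := rfl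
    rw [hcomp, ← Measure.map_map measurable_fst (hSt.prodMk hU), hlaw,
      Measure.map_fst_prod]
    simp [measure_univ]
  -- μ.map (St, U_i) is a product
  have hStB : μ.map (fun ω => (St ω, U ω i)) = (μ.map St).prod bern := by
    have hcomp : (fun ω => (St ω, U ω i))
        = (Prod.map id (fun u : Fin N → Bool => u i)) ∘ (fun ω => (St ω, U ω)) := rfl
    rw [hcomp, ← Measure.map_map (measurable_id.prodMap (measurable_pi_apply i))
      (hSt.prodMk hU), hlaw,
      ← Measure.map_prod_map _ _ measurable_id (measurable_pi_apply i),
      Measure.map_id, StmtAux.bern_eval, hmapSt]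
  have hB_St : ∀ᵐ s ∂μ.map St, condDistrib (fun ω => U ω i) St μ s = bern :=
    StmtAux.condDistrib_const_of_prod μ hSt hB bern hStB
  -- μ.map (C, U_i) is a product
  have hmapC : μ.map (fun ω => f (St ω)) = (Measure.pi fun _ : Fin (2 * N) => PZ).map f := by
    rw [← hmapSt]
    exact (Measure.map_map hf hSt).symm
  have hCB : μ.map (fun ω => (f (St ω), U ω i)) = (μ.map fun ω => f (St ω)).prod bern := by
    have hcomp : (fun ω => (f (St ω), U ω i))
        = (Prod.map f (fun u : Fin N → Bool => u i)) ∘ (fun ω => (St ω, U ω)) := rfl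
    rw [hcomp, ← Measure.map_map (hf.prodMap (measurable_pi_apply i)) (hSt.prodMk hU), hlaw,
      ← Measure.map_prod_map _ _ hf (measurable_pi_apply i), StmtAux.bern_eval, ← hmapC]
  have hB_C : ∀ᵐ c ∂μ.map (fun ω => f (St ω)),
      condDistrib (fun ω => U ω i) (fun ω => f (St ω)) μ c = bern :=
    StmtAux.condDistrib_const_of_prod μ hC hB bern hCB
  -- measurability of the graph set
  have hD : MeasurableSet {p : (𝒵 × 𝒵) × (Fin (2 * N) → 𝒵) | f p.2 = p.1} := by
    letI := upgradeStandardBorel (𝒵 × 𝒵)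
    exact MeasureTheory.StronglyMeasurable.measurableSet_eq_fun
      (Measurable.stronglyMeasurable (hf.comp measurable_snd))
      (Measurable.stronglyMeasurable measurable_fst)
  -- tower properties
  have htow1 := StmtAux.condDistrib_comp_ae μ (Y := fun ω => (W ω, U ω i)) hSt hf hY hD
  have htow2 := StmtAux.condDistrib_comp_ae μ (Y := W) hSt hf hW hD
  -- notation for kernels
  set ρ := condDistrib (fun ω => (W ω, U ω i)) St μ with hρdef
  set ρW := condDistrib W St μ with hρWdef
  set κ' := condDistrib St (fun ω => f (St ω)) μ with hκ'def
  set Qk : Kernel (Fin (2 * N) → 𝒵) (𝒲 × Bool) :=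
    ρW ×ₖ Kernel.const _ bern with hQkdef
  haveI : IsMarkovKernel Qk := by
    rw [hQkdef]
    infer_instance
  -- rewriting the right-hand side
  have hRHSdef : condMI μ W (fun ω => U ω i) St = ∫⁻ s, KLdiv (ρ s) (Qk s) ∂μ.map St := by
    simp only [condMI]
    refine lintegral_congr_ae ?_
    filter_upwards [hB_St] with s hs
    rw [hs, hQkdef, Kernel.prod_apply, Kernel.const_apply]
  -- rewriting the left-hand side
  have hLHSdef : condMI μ W (fun ω => U ω i) (fun ω => f (St ω))
      = ∫⁻ c, KLdiv ((κ' c).bind ⇑ρ) ((κ' c).bind ⇑Qk) ∂μ.map (fun ω => f (St ω)) := by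
    simp only [condMI]
    refine lintegral_congr_ae ?_
    filter_upwards [htow1, htow2, hB_C] with c h1 h2 h3
    rw [h1, h2, h3, Kernel.comp_apply, Kernel.comp_apply,
      ← StmtAux.bind_prod_const (κ' c) ρW bern, hQkdef]
  have hgoal : condMI μ W (fun ω => U ω i)
      (fun ω => (St ω (subIdx N i false), St ω (subIdx N i true)))
      = condMI μ W (fun ω => U ω i) (fun ω => f (St ω)) := rfl
  rw [hgoal, hLHSdef, hRHSdef]
  calc ∫⁻ c, KLdiv ((κ' c).bind ⇑ρ) ((κ' c).bind ⇑Qk) ∂μ.map (fun ω => f (St ω))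
      ≤ ∫⁻ c, (∫⁻ s, KLdiv (ρ s) (Qk s) ∂κ' c) ∂μ.map (fun ω => f (St ω)) :=
        lintegral_mono fun c => StmtAux.KLdiv_bind_le (κ' c) ρ Qk
    _ = ∫⁻ s, KLdiv (ρ s) (Qk s) ∂μ.map St := by
        have hGm : Measurable fun s => KLdiv (ρ s) (Qk s) :=
          StmtAux.measurable_KLdiv_kernel ρ Qk
        have h1 : (μ.map fun ω => f (St ω)) ⊗ₘ κ' = μ.map (fun ω => (f (St ω), St ω)) :=
          StmtAux.compProd_condDistrib μ hC hSt
        have hsnd : (μ.map fun ω => (f (St ω), St ω)).snd = μ.map St :=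
          Measure.snd_map_prodMk hC
        have hcp : ∫⁻ p : (𝒵 × 𝒵) × (Fin (2 * N) → 𝒵), KLdiv (ρ p.2) (Qk p.2)
              ∂((μ.map fun ω => f (St ω)) ⊗ₘ κ')
            = ∫⁻ c, ∫⁻ s, KLdiv (ρ s) (Qk s) ∂κ' c ∂(μ.map fun ω => f (St ω)) :=
          Measure.lintegral_compProd (hGm.comp measurable_snd)
        rw [← hcp, h1, ← hsnd, Measure.snd, lintegral_map hGm measurable_snd]
end
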